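/- arXiv:1512.08588 — 5 statements merged into one kernel-verified Lean document; each statement's English description precedes it below -/
import Mathlib

section
/- Let $M$ be a left-left Yetter-Drinfeld module over the tensor product bialgebra $H\otimes H^*$, with induced structures as above. Then the right-right Yetter-Drinfeld compatibility over $H$ holds: $(m\cdot h_2)_{\langle 0\rangle}\otimes h_1(m\cdot h_2)_{\langle 1\rangle} = m_{\langle 0\rangle}\cdot h_1\otimes m_{\langle 1\rangle}h_2$ for all $h\in H$, $m\in M$. -/
/- Common setup: Yetter-Drinfeld-Long bimodules over a bialgebra `H`, and
Yetter-Drinfeld modules over the tensor product bialgebra `H ⊗ H^*`. -/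

open TensorProduct LinearMap Module

noncomputable section

namespace YDL

variable (k : Type) [Field k] (H : Type) [Ring H] [Bialgebra k H]
variable (M : Type) [AddCommGroup M] [Module k M]

/-- Data of an `H`-bimodule, `H`-bicomodule structure on `M`:
left action `aL`, right action `aR`, left coaction `cL`, right coaction `cR`. -/
structure LRData where
  aL : H ⊗[k] M →ₗ[k] M
  aR : M ⊗[k] H →ₗ[k] M
  cL : M →ₗ[k] H ⊗[k] M
  cR : M →ₗ[k] M ⊗[k] H

variable {k H M}

/-- `M` is a left `H`-module. -/
structure IsLMod (D : LRData k H M) : Prop where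
  one_act : ∀ m : M, D.aL (1 ⊗ₜ m) = m
  mul_act : ∀ (g h : H) (m : M), D.aL ((g * h) ⊗ₜ m) = D.aL (g ⊗ₜ D.aL (h ⊗ₜ m))

/-- `M` is a right `H`-module. -/
structure IsRMod (D : LRData k H M) : Prop where
  act_one : ∀ m : M, D.aR (m ⊗ₜ 1) = m
  act_mul : ∀ (m : M) (g h : H), D.aR (m ⊗ₜ (g * h)) = D.aR (D.aR (m ⊗ₜ g) ⊗ₜ h)

/-- `M` is a left `H`-comodule. -/
structure IsLCom (D : LRData k H M) : Prop where
  coassoc : (TensorProduct.assoc k H H M).toLinearMap ∘ₗ map Coalgebra.comul LinearMap.id ∘ₗ D.cL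
      = map LinearMap.id D.cL ∘ₗ D.cL
  counit : (TensorProduct.lid k M).toLinearMap ∘ₗ map Coalgebra.counit LinearMap.id ∘ₗ D.cL
      = LinearMap.id

/-- `M` is a right `H`-comodule. -/
structure IsRCom (D : LRData k H M) : Prop where
  coassoc : (TensorProduct.assoc k M H H).toLinearMap ∘ₗ map D.cR LinearMap.id ∘ₗ D.cR
      = map LinearMap.id Coalgebra.comul ∘ₗ D.cR
  counit : (TensorProduct.rid k M).toLinearMap ∘ₗ map LinearMap.id Coalgebra.counit ∘ₗ D.cR
      = LinearMap.id

/-- Left-left Yetter-Drinfeld condition (1.1):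
`(h₁·m)₍₋₁₎h₂ ⊗ (h₁·m)₍₀₎ = h₁m₍₋₁₎ ⊗ h₂·m₍₀₎`, as maps `H ⊗ M → H ⊗ M`. -/
def Cond1 (D : LRData k H M) : Prop :=
  map (LinearMap.mul' k H ∘ₗ (TensorProduct.comm k H H).toLinearMap) LinearMap.id ∘ₗ
    (TensorProduct.assoc k H H M).symm.toLinearMap ∘ₗ
    map LinearMap.id (D.cL ∘ₗ D.aL) ∘ₗ
    (TensorProduct.assoc k H H M).toLinearMap ∘ₗ
    map ((TensorProduct.comm k H H).toLinearMap ∘ₗ Coalgebra.comul) LinearMap.id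
  = map (LinearMap.mul' k H) D.aL ∘ₗ
    (tensorTensorTensorComm k H H H M).toLinearMap ∘ₗ map Coalgebra.comul D.cL

/-- Left-right Long condition (1.2): `(h·m)₍₀₎ ⊗ (h·m)₍₁₎ = h·m₍₀₎ ⊗ m₍₁₎`. -/
def Cond2 (D : LRData k H M) : Prop :=
  D.cR ∘ₗ D.aL
  = map D.aL LinearMap.id ∘ₗ (TensorProduct.assoc k H M H).symm.toLinearMap ∘ₗ
      map LinearMap.id D.cR

/-- Right-right Yetter-Drinfeld condition (1.3):
`(m·h₂)₍₀₎ ⊗ h₁(m·h₂)₍₁₎ = m₍₀₎·h₁ ⊗ m₍₁₎h₂`, as maps `M ⊗ H → M ⊗ H`. -/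
def Cond3 (D : LRData k H M) : Prop :=
  map LinearMap.id (LinearMap.mul' k H ∘ₗ (TensorProduct.comm k H H).toLinearMap) ∘ₗ
    (TensorProduct.assoc k M H H).toLinearMap ∘ₗ
    map (D.cR ∘ₗ D.aR) LinearMap.id ∘ₗ
    (TensorProduct.assoc k M H H).symm.toLinearMap ∘ₗ
    map LinearMap.id ((TensorProduct.comm k H H).toLinearMap ∘ₗ Coalgebra.comul)
  = map D.aR (LinearMap.mul' k H) ∘ₗ
    (tensorTensorTensorComm k M H H H).toLinearMap ∘ₗ map D.cR Coalgebra.comul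

/-- Right-left Long condition (1.4): `(m·h)₍₋₁₎ ⊗ (m·h)₍₀₎ = m₍₋₁₎ ⊗ m₍₀₎·h`. -/
def Cond4 (D : LRData k H M) : Prop :=
  D.cL ∘ₗ D.aR
  = map LinearMap.id D.aR ∘ₗ (TensorProduct.assoc k H M H).toLinearMap ∘ₗ
      map D.cL LinearMap.id

/-- `M` with the data `D` is a Yetter-Drinfeld-Long bimodule: it is an `H`-bimodule
and an `H`-bicomodule satisfying the four compatibility conditions. -/
structure IsLR (D : LRData k H M) : Prop where
  lmod : IsLMod D
  rmod : IsRMod D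
  lcom : IsLCom D
  rcom : IsRCom D
  bimod : ∀ (h h' : H) (m : M), D.aL (h ⊗ₜ D.aR (m ⊗ₜ h')) = D.aR (D.aL (h ⊗ₜ m) ⊗ₜ h')
  bicom : (TensorProduct.assoc k H M H).toLinearMap ∘ₗ map D.cL LinearMap.id ∘ₗ D.cR
      = map LinearMap.id D.cR ∘ₗ D.cL
  cond1 : Cond1 D
  cond2 : Cond2 D
  cond3 : Cond3 D
  cond4 : Cond4 D

variable (k H M)

/-- The tensor product bialgebra `H ⊗ H^*` (as a vector space). -/
abbrev X := H ⊗[k] Module.Dual k H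

/-- Convolution product on `H^*`: `⟨f*g, h⟩ = ⟨f,h₁⟩⟨g,h₂⟩`. -/
def convL : Module.Dual k H ⊗[k] Module.Dual k H →ₗ[k] Module.Dual k H :=
  (Coalgebra.comul (R := k) (A := H)).dualMap ∘ₗ TensorProduct.dualDistrib k H H

/-- Counit of `H^*`: evaluation at `1`. -/
def εD : Module.Dual k H →ₗ[k] k := LinearMap.applyₗ (1 : H)

/-- Multiplication of the tensor product bialgebra `H ⊗ H^*`. -/
def μX : X k H ⊗[k] X k H →ₗ[k] X k H :=
  map (LinearMap.mul' k H) (convL k H) ∘ₗ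
    (tensorTensorTensorComm k H (Module.Dual k H) H (Module.Dual k H)).toLinearMap

/-- Unit of `H ⊗ H^*`. -/
def oneX : X k H := 1 ⊗ₜ (Coalgebra.counit : Module.Dual k H)

/-- Counit of `H ⊗ H^*`. -/
def εX : X k H →ₗ[k] k := LinearMap.mul' k k ∘ₗ map Coalgebra.counit (εD k H)

variable [FiniteDimensional k H]

/-- Comultiplication of `H^*` (for finite dimensional `H`): dual of multiplication. -/
def ΔD : Module.Dual k H →ₗ[k] Module.Dual k H ⊗[k] Module.Dual k H :=
  (TensorProduct.dualDistribEquiv k H H).symm.toLinearMap ∘ₗ (LinearMap.mul' k H).dualMap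

/-- Comultiplication of the tensor product bialgebra `H ⊗ H^*`. -/
def ΔX : X k H →ₗ[k] X k H ⊗[k] X k H :=
  (tensorTensorTensorComm k H H (Module.Dual k H) (Module.Dual k H)).toLinearMap ∘ₗ
    map Coalgebra.comul (ΔD k H)

/-- The canonical element `∑ hᵢ ⊗ hⁱ ∈ H ⊗ H^*` (dual bases). -/
def canel : H ⊗[k] Module.Dual k H := coevaluation k H 1

end YDL

end
namespace YDL

noncomputable section
open TensorProduct LinearMap Module

variable (k : Type) [Field k] (H : Type) [Ring H] [Bialgebra k H]
variable (M N P : Type) [AddCommGroup M] [Module k M] [AddCommGroup N] [Module k N]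
  [AddCommGroup P] [Module k P]

/-- Data of a module-comodule structure on `M` over `H ⊗ H^*`. -/
structure YDData where
  act : X k H ⊗[k] M →ₗ[k] M
  coact : M →ₗ[k] X k H ⊗[k] M

variable {k H M N P}

/-- `M` is a left `H ⊗ H^*`-module (stated on pure tensors, which span `H ⊗ H^*`). -/
structure IsXMod (E : YDData k H M) : Prop where
  one_act : ∀ m : M, E.act (oneX k H ⊗ₜ m) = m
  mul_act : ∀ (h h' : H) (f f' : Module.Dual k H) (m : M),
    E.act (((h * h') ⊗ₜ convL k H (f ⊗ₜ f')) ⊗ₜ m)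
      = E.act ((h ⊗ₜ f) ⊗ₜ E.act ((h' ⊗ₜ f') ⊗ₜ m))

variable [FiniteDimensional k H]

/-- `M` is a left `H ⊗ H^*`-comodule. -/
structure IsXCom (E : YDData k H M) : Prop where
  coassoc : (TensorProduct.assoc k (X k H) (X k H) M).toLinearMap ∘ₗ
      map (ΔX k H) LinearMap.id ∘ₗ E.coact = map LinearMap.id E.coact ∘ₗ E.coact
  counit : (TensorProduct.lid k M).toLinearMap ∘ₗ map (εX k H) LinearMap.id ∘ₗ E.coact
      = LinearMap.id

/-- The left-left Yetter-Drinfeld compatibility over `H ⊗ H^*`: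
`(x₁·m)₍₋₁₎x₂ ⊗ (x₁·m)₍₀₎ = x₁m₍₋₁₎ ⊗ x₂·m₍₀₎`, as maps `(H ⊗ H^*) ⊗ M → (H ⊗ H^*) ⊗ M`. -/
def CondYD (E : YDData k H M) : Prop :=
  map (μX k H ∘ₗ (TensorProduct.comm k (X k H) (X k H)).toLinearMap) LinearMap.id ∘ₗ
    (TensorProduct.assoc k (X k H) (X k H) M).symm.toLinearMap ∘ₗ
    map LinearMap.id (E.coact ∘ₗ E.act) ∘ₗ
    (TensorProduct.assoc k (X k H) (X k H) M).toLinearMap ∘ₗ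
    map ((TensorProduct.comm k (X k H) (X k H)).toLinearMap ∘ₗ ΔX k H) LinearMap.id
  = map (μX k H) E.act ∘ₗ
    (tensorTensorTensorComm k (X k H) (X k H) (X k H) M).toLinearMap ∘ₗ map (ΔX k H) E.coact

/-- `M` is a left-left Yetter-Drinfeld module over `H ⊗ H^*`. -/
structure IsYD (E : YDData k H M) : Prop where
  xmod : IsXMod E
  xcom : IsXCom E
  yd : CondYD E

/-! ### The functor `F : 𝓛𝓡(H) → ᴴ⊗ᴴ*YD` -/

/-- `f ⊗ m ↦ ⟨f, m₍₁₎⟩ m₍₀₎`, built from a right coaction `cR`. -/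
def evR (cR : M →ₗ[k] M ⊗[k] H) : Module.Dual k H ⊗[k] M →ₗ[k] M :=
  (TensorProduct.lid k M).toLinearMap ∘ₗ map (contractLeft k H) LinearMap.id ∘ₗ
    (TensorProduct.assoc k (Module.Dual k H) H M).symm.toLinearMap ∘ₗ
    map LinearMap.id ((TensorProduct.comm k M H).toLinearMap ∘ₗ cR)

/-- The `H ⊗ H^*`-action `(h ⊗ f) · m = ⟨f, m₍₁₎⟩ h · m₍₀₎` (formula (2.1)). -/
def Fact (D : LRData k H M) : X k H ⊗[k] M →ₗ[k] M :=
  D.aL ∘ₗ map LinearMap.id (evR D.cR) ∘ₗ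
    (TensorProduct.assoc k H (Module.Dual k H) M).toLinearMap

/-- `m ↦ ∑ hⁱ ⊗ m · hᵢ`, built from a right action `aR`. -/
def insD (aR : M ⊗[k] H →ₗ[k] M) : M →ₗ[k] Module.Dual k H ⊗[k] M :=
  map LinearMap.id (aR ∘ₗ (TensorProduct.comm k H M).toLinearMap) ∘ₗ
    (TensorProduct.assoc k (Module.Dual k H) H M).toLinearMap ∘ₗ
    TensorProduct.mk k (Module.Dual k H ⊗[k] H) M
      ((TensorProduct.comm k H (Module.Dual k H)) (canel k H))

/-- The `H ⊗ H^*`-coaction `ρ(m) = ∑ m₍₋₁₎ ⊗ hⁱ ⊗ m₍₀₎ · hᵢ` (formula (2.2)). -/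
def Fco (D : LRData k H M) : M →ₗ[k] X k H ⊗[k] M :=
  (TensorProduct.assoc k H (Module.Dual k H) M).symm.toLinearMap ∘ₗ
    map LinearMap.id (insD D.aR) ∘ₗ D.cL

/-- The functor `F` on objects. -/
def Fdata (D : LRData k H M) : YDData k H M := ⟨Fact D, Fco D⟩

/-! ### The functor `G : ᴴ⊗ᴴ*YD → 𝓛𝓡(H)` -/

variable (k H)

/-- `h ↦ h ⊗ ε`. -/
def ιH : H →ₗ[k] X k H :=
  (TensorProduct.mk k H (Module.Dual k H)).flip (Coalgebra.counit : Module.Dual k H)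

/-- `f ↦ 1 ⊗ f`. -/
def ιD : Module.Dual k H →ₗ[k] X k H := TensorProduct.mk k H (Module.Dual k H) 1

/-- `h ⊗ f ↦ ε*(f) h`. -/
def πH : X k H →ₗ[k] H := (TensorProduct.rid k H).toLinearMap ∘ₗ map LinearMap.id (εD k H)

/-- `(h ⊗ f) ⊗ h' ↦ ε(h)⟨f, h'⟩`. -/
def ξX : X k H ⊗[k] H →ₗ[k] k :=
  LinearMap.mul' k k ∘ₗ map Coalgebra.counit (contractLeft k H) ∘ₗ
    (TensorProduct.assoc k H (Module.Dual k H) H).toLinearMap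

variable {k H}

/-- The restricted left `H`-action `h · m = (h ⊗ ε) · m`. -/
def gL (A : X k H ⊗[k] M →ₗ[k] M) : H ⊗[k] M →ₗ[k] M := A ∘ₗ map (ιH k H) LinearMap.id

/-- The right `H`-action `m · h = ⟨(ε ⊗ id) m₍₋₁₎, h⟩ m₍₀₎`. -/
def gR (C : M →ₗ[k] X k H ⊗[k] M) : M ⊗[k] H →ₗ[k] M :=
  (TensorProduct.lid k M).toLinearMap ∘ₗ map (ξX k H) LinearMap.id ∘ₗ
    (TensorProduct.assoc k (X k H) H M).symm.toLinearMap ∘ₗ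
    map LinearMap.id (TensorProduct.comm k M H).toLinearMap ∘ₗ
    (TensorProduct.assoc k (X k H) M H).toLinearMap ∘ₗ map C LinearMap.id

/-- The left `H`-coaction `ρ_L(m) = (id ⊗ ε*)(m₍₋₁₎) ⊗ m₍₀₎`. -/
def gcL (C : M →ₗ[k] X k H ⊗[k] M) : M →ₗ[k] H ⊗[k] M := map (πH k H) LinearMap.id ∘ₗ C

/-- The right `H`-coaction `ρ_R(m) = ∑ (1 ⊗ hⁱ) · m ⊗ hᵢ`. -/
def gcR (A : X k H ⊗[k] M →ₗ[k] M) : M →ₗ[k] M ⊗[k] H :=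
  map (A ∘ₗ map (ιD k H) LinearMap.id) LinearMap.id ∘ₗ
    (TensorProduct.assoc k (Module.Dual k H) M H).symm.toLinearMap ∘ₗ
    map LinearMap.id (TensorProduct.comm k H M).toLinearMap ∘ₗ
    (TensorProduct.assoc k (Module.Dual k H) H M).toLinearMap ∘ₗ
    map (TensorProduct.comm k H (Module.Dual k H)).toLinearMap LinearMap.id ∘ₗ
    TensorProduct.mk k (H ⊗[k] Module.Dual k H) M (canel k H)

/-- The functor `G` on objects. -/
def Gdata (E : YDData k H M) : LRData k H M :=
  ⟨gL E.act, gR E.coact, gcL E.coact, gcR E.act⟩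

end

end YDL
namespace YDL

noncomputable section
open TensorProduct LinearMap Module

variable {k : Type} [Field k] {H : Type} [Ring H] [Bialgebra k H]
variable {M N P : Type} [AddCommGroup M] [Module k M] [AddCommGroup N] [Module k N]
  [AddCommGroup P] [Module k P]

/-- The tensor product of two Yetter-Drinfeld-Long bimodule structures, with diagonal
actions and codiagonal coactions. -/
def tensorLR (D : LRData k H M) (D' : LRData k H N) : LRData k H (M ⊗[k] N) where
  aL := map D.aL D'.aL ∘ₗ (tensorTensorTensorComm k H H M N).toLinearMap ∘ₗ
    map Coalgebra.comul LinearMap.id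
  aR := map D.aR D'.aR ∘ₗ (tensorTensorTensorComm k M N H H).toLinearMap ∘ₗ
    map LinearMap.id Coalgebra.comul
  cL := map (LinearMap.mul' k H) LinearMap.id ∘ₗ
    (tensorTensorTensorComm k H M H N).toLinearMap ∘ₗ map D.cL D'.cL
  cR := map LinearMap.id (LinearMap.mul' k H) ∘ₗ
    (tensorTensorTensorComm k M H N H).toLinearMap ∘ₗ map D.cR D'.cR

variable [FiniteDimensional k H]

/-- The tensor product of two Yetter-Drinfeld module structures over `H ⊗ H^*`. -/
def tensorYD (E : YDData k H M) (E' : YDData k H N) : YDData k H (M ⊗[k] N) where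
  act := map E.act E'.act ∘ₗ (tensorTensorTensorComm k (X k H) (X k H) M N).toLinearMap ∘ₗ
    map (ΔX k H) LinearMap.id
  coact := map (μX k H) LinearMap.id ∘ₗ
    (tensorTensorTensorComm k (X k H) M (X k H) N).toLinearMap ∘ₗ map E.coact E'.coact

/-- A linear map `φ : M → N` is a morphism of Yetter-Drinfeld-Long bimodules
(`H`-bilinear and `H`-bicolinear). -/
def LRHom (D : LRData k H M) (D' : LRData k H N) (φ : M →ₗ[k] N) : Prop :=
  φ ∘ₗ D.aL = D'.aL ∘ₗ map LinearMap.id φ ∧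
  φ ∘ₗ D.aR = D'.aR ∘ₗ map φ LinearMap.id ∧
  D'.cL ∘ₗ φ = map LinearMap.id φ ∘ₗ D.cL ∧
  D'.cR ∘ₗ φ = map φ LinearMap.id ∘ₗ D.cR

/-- A linear map `φ : M → N` is a morphism of Yetter-Drinfeld modules over `H ⊗ H^*`
(`H ⊗ H^*`-linear and colinear). -/
def YDHom (E : YDData k H M) (E' : YDData k H N) (φ : M →ₗ[k] N) : Prop :=
  φ ∘ₗ E.act = E'.act ∘ₗ map LinearMap.id φ ∧
  E'.coact ∘ₗ φ = map LinearMap.id φ ∘ₗ E.coact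

/-- The braiding of `𝓛𝓡(H)`: `m ⊗ n ↦ m₍₋₁₎·n₍₀₎ ⊗ m₍₀₎·n₍₁₎`. -/
def cLR (D : LRData k H M) (D' : LRData k H N) : M ⊗[k] N →ₗ[k] N ⊗[k] M :=
  map D'.aL D.aR ∘ₗ (tensorTensorTensorComm k H M N H).toLinearMap ∘ₗ map D.cL D'.cR

/-- The inverse braiding of `𝓛𝓡(H)` (`T` is the inverse of the antipode):
`n ⊗ m ↦ m₍₀₎·S⁻¹(n₍₁₎) ⊗ S⁻¹(m₍₋₁₎)·n₍₀₎`. -/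
def cLRinv (D : LRData k H M) (D' : LRData k H N) (T : H →ₗ[k] H) :
    N ⊗[k] M →ₗ[k] M ⊗[k] N :=
  map D.aR D'.aL ∘ₗ
    (TensorProduct.comm k (H ⊗[k] N) (M ⊗[k] H)).toLinearMap ∘ₗ
    (tensorTensorTensorComm k H M N H).toLinearMap ∘ₗ
    (TensorProduct.comm k (N ⊗[k] H) (H ⊗[k] M)).toLinearMap ∘ₗ
    map (map LinearMap.id T) (map T LinearMap.id) ∘ₗ map D'.cR D.cL

/-- The braiding of the Yetter-Drinfeld category over `H ⊗ H^*`: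
`m ⊗ n ↦ m₍₋₁₎·n ⊗ m₍₀₎`, built from the coaction on `M` and the action on `N`. -/
def cYD (C : M →ₗ[k] X k H ⊗[k] M) (A' : X k H ⊗[k] N →ₗ[k] N) : M ⊗[k] N →ₗ[k] N ⊗[k] M :=
  map A' LinearMap.id ∘ₗ (TensorProduct.assoc k (X k H) N M).symm.toLinearMap ∘ₗ
    map LinearMap.id (TensorProduct.comm k M N).toLinearMap ∘ₗ
    (TensorProduct.assoc k (X k H) M N).toLinearMap ∘ₗ map C LinearMap.id

end

end YDL
namespace YDL
open TensorProduct LinearMap Module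


noncomputable section Aux
open TensorProduct LinearMap Module
set_option maxHeartbeats 1000000
set_option synthInstance.maxHeartbeats 400000
set_option linter.unusedSectionVars false

variable {k : Type} [Field k] {H : Type} [Ring H] [Bialgebra k H]
    [FiniteDimensional k H] {M : Type} [AddCommGroup M] [Module k M]

local notation "𝔅" => Basis.ofVectorSpace k H
local notation "II" => (Basis.ofVectorSpaceIndex k H)

lemma canel_eq : canel k H = ∑ i : II, (𝔅) i ⊗ₜ[k] (𝔅).coord i := by
  rw [canel, coevaluation_apply_one]

lemma xiX_tmul (a : H) (f : Module.Dual k H) (w : H) :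
    ξX k H ((a ⊗ₜ f) ⊗ₜ w) = Coalgebra.counit a * f w := by
  simp [ξX, LinearMap.mul'_apply]

/-- `evq h (x ⊗ n) = ξX (x ⊗ h) • n`. -/
def evq (h : H) : X k H ⊗[k] M →ₗ[k] M :=
  (TensorProduct.lid k M).toLinearMap ∘ₗ
    map (ξX k H ∘ₗ (TensorProduct.mk k (X k H) H).flip h) LinearMap.id

@[simp] lemma evq_tmul (h : H) (x : X k H) (n : M) :
    evq h (x ⊗ₜ n) = ξX k H (x ⊗ₜ h) • n := by
  simp [evq]

lemma gR_eval (C : M →ₗ[k] X k H ⊗[k] M) (m : M) (h : H) :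
    gR C (m ⊗ₜ h) = evq h (C m) := by
  rw [gR]
  simp only [coe_comp, LinearEquiv.coe_coe, Function.comp_apply, map_tmul, id_coe, id_eq]
  induction C m using TensorProduct.induction_on with
  | zero => simp
  | tmul x n => simp [evq]
  | add z w hz hw =>
      simp only [add_tmul, map_add, hz, hw]

lemma gcR_eval (A : X k H ⊗[k] M →ₗ[k] M) (m : M) :
    gcR A m = ∑ i : II, A (((1 : H) ⊗ₜ (𝔅).coord i) ⊗ₜ m) ⊗ₜ (𝔅) i := by
  rw [gcR]
  simp only [coe_comp, LinearEquiv.coe_coe, Function.comp_apply, mk_apply, canel_eq, ιD]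
  rw [sum_tmul, map_sum, map_sum, map_sum, map_sum, map_sum]
  refine Finset.sum_congr rfl fun i _ => ?_
  simp [mk_apply]


lemma convL_apply (f g : Dual k H) (w : H) :
    convL k H (f ⊗ₜ g) w = TensorProduct.dualDistrib k H H (f ⊗ₜ g) (Coalgebra.comul w) := by
  simp [convL]

lemma muX_tmul (a b : H) (f g : Dual k H) :
    μX k H ((a ⊗ₜ f) ⊗ₜ (b ⊗ₜ g)) = (a * b) ⊗ₜ convL k H (f ⊗ₜ g) := by
  simp [μX, mul'_apply]

lemma deltaX_iD (f : Dual k H) :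
    ΔX k H ((1:H) ⊗ₜ f) = map (ιD k H) (ιD k H) (ΔD k H f) := by
  rw [ΔX]
  simp only [coe_comp, LinearEquiv.coe_coe, Function.comp_apply, map_tmul,
    Bialgebra.comul_one, id_coe, id_eq]
  rw [Algebra.TensorProduct.one_def]
  induction ΔD k H f using TensorProduct.induction_on with
  | zero => simp
  | tmul x y => simp [ιD]
  | add z w hz hw => rw [tmul_add, map_add, map_add, hz, hw]

/-- `g ↦ (id ⊗ g) δ`. -/
def dRl (δ : H ⊗[k] H) : Dual k H →ₗ[k] H where
  toFun g := (TensorProduct.rid k H) (map LinearMap.id g δ)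
  map_add' g g' := by rw [TensorProduct.map_add_right]; simp
  map_smul' c g := by rw [TensorProduct.map_smul_right]; simp

@[simp] lemma dRl_tmul (a b : H) (g : Dual k H) : dRl (a ⊗ₜ[k] b) g = g b • a := by
  simp [dRl]

@[simp] lemma dRl_zero (g : Dual k H) : dRl (0 : H ⊗[k] H) g = 0 := by simp [dRl]

@[simp] lemma dRl_add (δ δ' : H ⊗[k] H) (g : Dual k H) :
    dRl (δ + δ') g = dRl δ g + dRl δ' g := by simp [dRl]

/-- `q ↦ (q ⊗ id) δ`. -/
def dLl (δ : H ⊗[k] H) : Dual k H →ₗ[k] H where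
  toFun q := (TensorProduct.lid k H) (map q LinearMap.id δ)
  map_add' q q' := by rw [TensorProduct.map_add_left]; simp
  map_smul' c q := by rw [TensorProduct.map_smul_left]; simp

@[simp] lemma dLl_tmul (a b : H) (q : Dual k H) : dLl (a ⊗ₜ[k] b) q = q a • b := by
  simp [dLl]

@[simp] lemma dLl_zero (q : Dual k H) : dLl (0 : H ⊗[k] H) q = 0 := by simp [dLl]

@[simp] lemma dLl_add (δ δ' : H ⊗[k] H) (q : Dual k H) :
    dLl (δ + δ') q = dLl δ q + dLl δ' q := by simp [dLl]

lemma sum_dualDistrib_R (g : Dual k H) (δ : H ⊗[k] H) :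
    ∑ u : II, TensorProduct.dualDistrib k H H ((𝔅).coord u ⊗ₜ g) δ • (𝔅) u = dRl δ g := by
  induction δ using TensorProduct.induction_on with
  | zero => simp
  | tmul a b =>
      simp only [dualDistrib_apply, dRl_tmul]
      have h1 : ∀ u : II, ((𝔅).coord u a * g b) • (𝔅) u
          = g b • ((𝔅).repr a u • (𝔅) u) := fun u => by
        rw [Basis.coord_apply, mul_comm, mul_smul]
      rw [Finset.sum_congr rfl fun u _ => h1 u, ← Finset.smul_sum, Basis.sum_repr]
  | add z w hz hw =>
      simp only [map_add, add_smul, Finset.sum_add_distrib, hz, hw, dRl_add]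

lemma sum_dualDistrib_L (q : Dual k H) (δ : H ⊗[k] H) :
    ∑ v : II, TensorProduct.dualDistrib k H H (q ⊗ₜ (𝔅).coord v) δ • (𝔅) v = dLl δ q := by
  induction δ using TensorProduct.induction_on with
  | zero => simp
  | tmul a b =>
      simp only [dualDistrib_apply, dLl_tmul]
      have h1 : ∀ v : II, (q a * (𝔅).coord v b) • (𝔅) v
          = q a • ((𝔅).repr b v • (𝔅) v) := fun v => by
        rw [Basis.coord_apply, mul_smul]
      rw [Finset.sum_congr rfl fun v _ => h1 v, ← Finset.smul_sum, Basis.sum_repr]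
  | add z w hz hw =>
      simp only [map_add, add_smul, Finset.sum_add_distrib, hz, hw, dLl_add]

lemma deltaD_canel :
    ∑ i : II, ΔD k H ((𝔅).coord i) ⊗ₜ[k] (𝔅) i
      = ∑ u : II, ∑ v : II, ((𝔅).coord u ⊗ₜ[k] (𝔅).coord v) ⊗ₜ[k] ((𝔅) u * (𝔅) v) := by
  apply (TensorProduct.congr (TensorProduct.dualDistribEquiv k H H)
    (LinearEquiv.refl k H)).injective
  classical
  rw [map_sum, map_sum]
  simp only [map_sum, congr_tmul, LinearEquiv.refl_apply]
  have hΔ : ∀ f : Dual k H, (TensorProduct.dualDistribEquiv k H H) (ΔD k H f)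
      = (LinearMap.mul' k H).dualMap f := fun f => by
    rw [ΔD]; exact (TensorProduct.dualDistribEquiv k H H).apply_symm_apply _
  simp only [hΔ]
  have hD : ∀ x : Dual k H ⊗[k] Dual k H, (TensorProduct.dualDistribEquiv k H H) x
      = TensorProduct.dualDistrib k H H x := fun x => rfl
  simp only [hD]
  apply (dualTensorHomEquivOfBasis (N := H) (Basis.ofVectorSpace k (H ⊗[k] H))).injective
  simp only [dualTensorHomEquivOfBasis_apply, map_sum]
  apply TensorProduct.ext'
  intro a b
  simp only [LinearMap.coe_sum, Finset.sum_apply, dualTensorHom_apply, dualMap_apply,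
    mul'_apply, dualDistrib_apply]
  have lhs : ∑ i : II, ((𝔅).coord i (a * b)) • (𝔅) i = a * b := by
    simp only [Basis.coord_apply]; exact Basis.sum_repr _ _
  rw [lhs]
  have rhs : ∀ u : II, ∑ v : II, ((𝔅).coord u a * (𝔅).coord v b) • ((𝔅) u * (𝔅) v)
      = ((𝔅).coord u a • (𝔅) u) * b := fun u => by
    have step : ∀ v : II, ((𝔅).coord u a * (𝔅).coord v b) • ((𝔅) u * (𝔅) v)
        = (𝔅).coord u a • ((𝔅) u * ((𝔅).repr b v • (𝔅) v)) := fun v => by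
      rw [Basis.coord_apply, Basis.coord_apply, mul_smul, mul_smul_comm]
    rw [Finset.sum_congr rfl fun v _ => step v, ← Finset.smul_sum, ← Finset.mul_sum,
      Basis.sum_repr, smul_mul_assoc]
  rw [Finset.sum_congr rfl fun u _ => rhs u, ← Finset.sum_mul]
  have : ∑ u : II, (𝔅).coord u a • (𝔅) u = a := by
    simp only [Basis.coord_apply]; exact Basis.sum_repr _ _
  rw [this]


/-- `n ↦ (1 ⊗ eⁱᵛ) · n`. -/
def Afun (E : YDData k H M) (v : II) : M →ₗ[k] M :=
  E.act ∘ₗ TensorProduct.mk k (X k H) M ((1 : H) ⊗ₜ (𝔅).coord v)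

@[simp] lemma Afun_apply (E : YDData k H M) (v : II) (n : M) :
    Afun E v n = E.act (((1 : H) ⊗ₜ (𝔅).coord v) ⊗ₜ n) := rfl

/-- `a ⊗ g ↦ ε(a) • (id ⊗ g) δ`. -/
def νR (δ : H ⊗[k] H) : X k H →ₗ[k] H :=
  (TensorProduct.lid k H).toLinearMap ∘ₗ map Coalgebra.counit (dRl δ)

@[simp] lemma νR_tmul (δ : H ⊗[k] H) (a : H) (g : Dual k H) :
    νR (δ) (a ⊗ₜ g) = Coalgebra.counit (R := k) a • dRl δ g := by simp [νR]

lemma νR_zero : νR (0 : H ⊗[k] H) = 0 :=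
  TensorProduct.ext' fun a g => by simp

lemma νR_add (δ δ' : H ⊗[k] H) : νR (δ + δ') = νR δ + νR δ' :=
  TensorProduct.ext' fun a g => by simp [smul_add]

/-- `a ⊗ q ↦ ε(a) • (q ⊗ id) δ`. -/
def νL (δ : H ⊗[k] H) : X k H →ₗ[k] H :=
  (TensorProduct.lid k H).toLinearMap ∘ₗ map Coalgebra.counit (dLl δ)

@[simp] lemma νL_tmul (δ : H ⊗[k] H) (a : H) (q : Dual k H) :
    νL (δ) (a ⊗ₜ q) = Coalgebra.counit (R := k) a • dLl δ q := by simp [νL]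

lemma νL_zero : νL (0 : H ⊗[k] H) = 0 :=
  TensorProduct.ext' fun a g => by simp

lemma νL_add (δ δ' : H ⊗[k] H) : νL (δ + δ') = νL δ + νL δ' :=
  TensorProduct.ext' fun a g => by simp [smul_add]

/-- `x ⊗ n ↦ ((1 ⊗ eⁱᵛ)·n) ⊗ (νR δ x * eᵥ)`. -/
def NRv (E : YDData k H M) (v : II) (δ : H ⊗[k] H) :
    X k H ⊗[k] M →ₗ[k] M ⊗[k] H :=
  map (Afun E v) (LinearMap.mulRight k ((𝔅) v) ∘ₗ νR δ) ∘ₗ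
    (TensorProduct.comm k (X k H) M).toLinearMap

@[simp] lemma NRv_tmul (E : YDData k H M) (v : II) (δ : H ⊗[k] H) (x : X k H) (n : M) :
    NRv E v δ (x ⊗ₜ n) = Afun E v n ⊗ₜ (νR δ x * (𝔅) v) := by
  simp [NRv]

lemma NRv_zero (E : YDData k H M) (v : II) : NRv E v (0 : H ⊗[k] H) = 0 := by
  rw [NRv, νR_zero]
  simp only [LinearMap.comp_zero, TensorProduct.map_zero_right, LinearMap.zero_comp]

lemma NRv_add (E : YDData k H M) (v : II) (δ δ' : H ⊗[k] H) :
    NRv E v (δ + δ') = NRv E v δ + NRv E v δ' := by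
  rw [NRv, νR_add]
  simp only [LinearMap.comp_add, TensorProduct.map_add_right, LinearMap.add_comp, NRv]

/-- `x ⊗ n ↦ n ⊗ (w * νL δ x)`. -/
def NLw (w : H) (δ : H ⊗[k] H) :
    X k H ⊗[k] M →ₗ[k] M ⊗[k] H :=
  map LinearMap.id (LinearMap.mulLeft k w ∘ₗ νL δ) ∘ₗ
    (TensorProduct.comm k (X k H) M).toLinearMap

@[simp] lemma NLw_tmul (w : H) (δ : H ⊗[k] H) (x : X k H) (n : M) :
    NLw (M := M) w δ (x ⊗ₜ n) = n ⊗ₜ (w * νL δ x) := by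
  simp [NLw]

lemma NLw_zero (w : H) : NLw (M := M) w (0 : H ⊗[k] H) = 0 := by
  rw [NLw, νL_zero]
  simp only [LinearMap.comp_zero, TensorProduct.map_zero_right, LinearMap.zero_comp]

lemma NLw_add (w : H) (δ δ' : H ⊗[k] H) :
    NLw (M := M) w (δ + δ') = NLw w δ + NLw w δ' := by
  rw [NLw, νL_add]
  simp only [LinearMap.comp_add, TensorProduct.map_add_right, LinearMap.add_comp, NLw]

/-- Reduction of the left-hand side of `Cond3` to normal form. -/
lemma L1core (E : YDData k H M) (m : M) (δ : H ⊗[k] H) :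
    (map LinearMap.id (LinearMap.mul' k H ∘ₗ (TensorProduct.comm k H H).toLinearMap))
      ((TensorProduct.assoc k M H H)
        ((map (gcR E.act ∘ₗ gR E.coact) LinearMap.id)
          ((TensorProduct.assoc k M H H).symm
            (m ⊗ₜ (TensorProduct.comm k H H) δ))))
      = ∑ v : II, NRv E v δ (E.coact m) := by
  induction δ using TensorProduct.induction_on with
  | zero =>
      simp only [map_zero, tmul_zero, NRv_zero, LinearMap.zero_apply, Finset.sum_const_zero]
  | add z w hz hw =>
      simp only [map_add, tmul_add] at hz hw ⊢
      rw [hz, hw]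
      simp only [NRv_add, LinearMap.add_apply, Finset.sum_add_distrib]
  | tmul d1 d2 =>
      simp only [comm_tmul, assoc_symm_tmul, map_tmul, id_coe, id_eq, coe_comp,
        Function.comp_apply, LinearEquiv.coe_coe]
      rw [gR_eval, gcR_eval]
      rw [sum_tmul, map_sum, map_sum]
      induction E.coact m using TensorProduct.induction_on with
      | zero => simp
      | add z w hz hw =>
          simp only [map_add, tmul_add, add_tmul, LinearMap.map_add] at hz hw ⊢
          rw [Finset.sum_add_distrib, Finset.sum_add_distrib, hz, hw]
      | tmul x n =>
          induction x using TensorProduct.induction_on with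
          | zero => simp
          | add x y hx hy =>
              simp only [map_add, tmul_add, add_tmul, LinearMap.map_add] at hx hy ⊢
              rw [Finset.sum_add_distrib, Finset.sum_add_distrib, hx, hy]
          | tmul a g =>
              refine Finset.sum_congr rfl fun i _ => ?_
              simp only [evq_tmul, xiX_tmul, NRv_tmul, νR_tmul, dRl_tmul, Afun_apply,
                assoc_tmul, map_tmul, id_coe, id_eq, coe_comp, Function.comp_apply,
                LinearEquiv.coe_coe, comm_tmul, mul'_apply, tmul_smul, LinearMap.map_smul]
              rw [smul_smul, smul_mul_assoc, smul_tmul]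
  
/-- Reduction of the right-hand side of `Cond3` (one basis summand) to normal form. -/
lemma R1core (C : M →ₗ[k] X k H ⊗[k] M) (n : M) (w : H) (δ : H ⊗[k] H) :
    (map (gR C) (LinearMap.mul' k H))
      ((tensorTensorTensorComm k M H H H) ((n ⊗ₜ w) ⊗ₜ δ))
      = NLw w δ (C n) := by
  induction δ using TensorProduct.induction_on with
  | zero => simp [NLw_zero]
  | add z w' hz hw' =>
      simp only [tmul_add, map_add, NLw_add, LinearMap.add_apply] at hz hw' ⊢
      rw [hz, hw']
  | tmul d1 d2 =>
      simp only [tensorTensorTensorComm_tmul, map_tmul, mul'_apply, LinearEquiv.coe_coe]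
      rw [gR_eval]
      induction C n using TensorProduct.induction_on with
      | zero => simp
      | add z w' hz hw' =>
          simp only [map_add, add_tmul, LinearMap.map_add] at hz hw' ⊢
          rw [hz, hw']
      | tmul x n' =>
          induction x using TensorProduct.induction_on with
          | zero => simp
          | add x y hx hy =>
              simp only [map_add, add_tmul, LinearMap.map_add] at hx hy ⊢
              rw [hx, hy]
          | tmul c q =>
              simp only [evq_tmul, xiX_tmul, NLw_tmul, νL_tmul, dLl_tmul]
              rw [smul_smul, mul_smul_comm, smul_tmul]

/-- Reduction of the full right-hand side of `Cond3`. -/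
lemma R1 (E : YDData k H M) (m : M) (h : H) :
    (map (gR E.coact) (LinearMap.mul' k H))
      ((tensorTensorTensorComm k M H H H) (gcR E.act m ⊗ₜ Coalgebra.comul h))
      = ∑ u : II, NLw ((𝔅) u) (Coalgebra.comul h)
          (E.coact (E.act (((1 : H) ⊗ₜ (𝔅).coord u) ⊗ₜ m))) := by
  rw [gcR_eval, sum_tmul, map_sum, map_sum]
  exact Finset.sum_congr rfl fun u _ => R1core _ _ _ _

/-- Inner reduction for the transformed Yetter-Drinfeld right-hand side. -/
lemma L2core (E : YDData k H M) (h : H) (v : II) (z : X k H ⊗[k] M) :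
    ∑ u : II, evq h ((map (μX k H) E.act)
        ((tensorTensorTensorComm k (X k H) (X k H) (X k H) M)
          (((((1 : H) ⊗ₜ (𝔅).coord u) ⊗ₜ ((1 : H) ⊗ₜ (𝔅).coord v))) ⊗ₜ z)))
      ⊗ₜ[k] ((𝔅) u * (𝔅) v)
    = NRv E v (Coalgebra.comul h) z := by
  induction z using TensorProduct.induction_on with
  | zero => simp
  | add z w hz hw =>
      simp only [tmul_add, map_add, LinearMap.map_add, add_tmul] at hz hw ⊢
      rw [Finset.sum_add_distrib, hz, hw]
  | tmul x n =>
      induction x using TensorProduct.induction_on with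
      | zero => simp
      | add x y hx hy =>
          simp only [tmul_add, add_tmul, map_add, LinearMap.map_add] at hx hy ⊢
          rw [Finset.sum_add_distrib, hx, hy]
      | tmul a g =>
          have step : ∀ u : II,
              evq h ((map (μX k H) E.act)
                ((tensorTensorTensorComm k (X k H) (X k H) (X k H) M)
                  (((((1 : H) ⊗ₜ (𝔅).coord u) ⊗ₜ ((1 : H) ⊗ₜ (𝔅).coord v)))
                    ⊗ₜ ((a ⊗ₜ g) ⊗ₜ n)))) ⊗ₜ[k] ((𝔅) u * (𝔅) v)
              = E.act (((1 : H) ⊗ₜ (𝔅).coord v) ⊗ₜ n) ⊗ₜ[k]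
                  (Coalgebra.counit (R := k) a •
                    ((TensorProduct.dualDistrib k H H ((𝔅).coord u ⊗ₜ g)
                        (Coalgebra.comul h)) • (𝔅) u * (𝔅) v)) := fun u => by
            simp only [tensorTensorTensorComm_tmul, map_tmul, muX_tmul, one_mul,
              evq_tmul, xiX_tmul, LinearEquiv.coe_coe]
            rw [convL_apply, mul_smul, smul_tmul, ← smul_mul_assoc,
              smul_tmul, smul_mul_assoc, smul_mul_assoc, smul_comm]
          rw [Finset.sum_congr rfl fun u _ => step u, ← tmul_sum, ← Finset.smul_sum]
          rw [← Finset.sum_mul, sum_dualDistrib_R]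
          simp only [NRv_tmul, νR_tmul, Afun_apply, smul_mul_assoc]

/-- Reduction of the transformed Yetter-Drinfeld right-hand side. -/
lemma L2 (E : YDData k H M) (m : M) (h : H) :
    map (evq h) LinearMap.id
      (∑ i : II,
        (map (μX k H) E.act
          ((tensorTensorTensorComm k (X k H) (X k H) (X k H) M)
            (map (ΔX k H) E.coact ((((1 : H) ⊗ₜ (𝔅).coord i) ⊗ₜ m)))) ⊗ₜ[k] (𝔅) i))
    = ∑ v : II, NRv E v (Coalgebra.comul h) (E.coact m) := by
  have hΦ : ∀ i : II,
      (map (μX k H) E.act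
          ((tensorTensorTensorComm k (X k H) (X k H) (X k H) M)
            (map (ΔX k H) E.coact ((((1 : H) ⊗ₜ (𝔅).coord i) ⊗ₜ m)))) ⊗ₜ[k] (𝔅) i)
      = (map (map (μX k H) E.act ∘ₗ
          (tensorTensorTensorComm k (X k H) (X k H) (X k H) M).toLinearMap ∘ₗ
          (TensorProduct.mk k (X k H ⊗[k] X k H) (X k H ⊗[k] M)).flip (E.coact m) ∘ₗ
          map (ιD k H) (ιD k H)) LinearMap.id)
        (ΔD k H ((𝔅).coord i) ⊗ₜ (𝔅) i) := fun i => by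
    simp only [map_tmul, coe_comp, Function.comp_apply, LinearEquiv.coe_coe, flip_apply,
      mk_apply, id_coe, id_eq, deltaX_iD]
  rw [Finset.sum_congr rfl fun i _ => hΦ i, ← map_sum, deltaD_canel]
  rw [map_sum, map_sum]
  simp only [map_sum, map_tmul, coe_comp, Function.comp_apply, LinearEquiv.coe_coe,
    flip_apply, mk_apply, id_coe, id_eq]
  rw [Finset.sum_comm]
  exact Finset.sum_congr rfl fun v _ => L2core E h v (E.coact m)

/-- Inner reduction for the transformed Yetter-Drinfeld left-hand side. -/
lemma R2core (h : H) (w : H) (z : X k H ⊗[k] M) :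
    ∑ v : II, evq h ((map (μX k H ∘ₗ (TensorProduct.comm k (X k H) (X k H)).toLinearMap)
          LinearMap.id)
        ((TensorProduct.assoc k (X k H) (X k H) M).symm
          ((((1 : H) ⊗ₜ (𝔅).coord v)) ⊗ₜ z))) ⊗ₜ[k] (w * (𝔅) v)
    = NLw w (Coalgebra.comul h) z := by
  induction z using TensorProduct.induction_on with
  | zero => simp
  | add z z' hz hz' =>
      simp only [tmul_add, map_add, LinearMap.map_add, add_tmul] at hz hz' ⊢
      rw [Finset.sum_add_distrib, hz, hz']
  | tmul x n =>
      induction x using TensorProduct.induction_on with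
      | zero => simp
      | add x y hx hy =>
          simp only [tmul_add, add_tmul, map_add, LinearMap.map_add] at hx hy ⊢
          rw [Finset.sum_add_distrib, hx, hy]
      | tmul c q =>
          have step : ∀ v : II,
              evq h ((map (μX k H ∘ₗ (TensorProduct.comm k (X k H) (X k H)).toLinearMap)
                  LinearMap.id)
                ((TensorProduct.assoc k (X k H) (X k H) M).symm
                  ((((1 : H) ⊗ₜ (𝔅).coord v)) ⊗ₜ ((c ⊗ₜ q) ⊗ₜ n)))) ⊗ₜ[k] (w * (𝔅) v)
              = n ⊗ₜ[k] (Coalgebra.counit (R := k) c •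
                  (w * ((TensorProduct.dualDistrib k H H (q ⊗ₜ (𝔅).coord v)
                      (Coalgebra.comul h)) • (𝔅) v))) := fun v => by
            simp only [assoc_symm_tmul, map_tmul, coe_comp, Function.comp_apply,
              LinearEquiv.coe_coe, comm_tmul, muX_tmul, mul_one, evq_tmul, xiX_tmul,
              id_coe, id_eq]
            rw [convL_apply, mul_smul, smul_tmul, ← mul_smul_comm,
              mul_smul_comm, mul_smul_comm, smul_comm, smul_tmul]
          rw [Finset.sum_congr rfl fun v _ => step v, ← tmul_sum, ← Finset.smul_sum]
          rw [← Finset.mul_sum, sum_dualDistrib_L]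
          simp only [NLw_tmul, νL_tmul, mul_smul_comm]

/-- Reduction of the transformed Yetter-Drinfeld left-hand side. -/
lemma R2 (E : YDData k H M) (m : M) (h : H) :
    map (evq h) LinearMap.id
      (∑ i : II,
        ((map (μX k H ∘ₗ (TensorProduct.comm k (X k H) (X k H)).toLinearMap) LinearMap.id)
          ((TensorProduct.assoc k (X k H) (X k H) M).symm
            ((map LinearMap.id (E.coact ∘ₗ E.act))
              ((TensorProduct.assoc k (X k H) (X k H) M)
                ((map ((TensorProduct.comm k (X k H) (X k H)).toLinearMap ∘ₗ ΔX k H)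
                    LinearMap.id) ((((1 : H) ⊗ₜ (𝔅).coord i) ⊗ₜ m))))))) ⊗ₜ[k] (𝔅) i)
    = ∑ u : II, NLw ((𝔅) u) (Coalgebra.comul h)
        (E.coact (E.act (((1 : H) ⊗ₜ (𝔅).coord u) ⊗ₜ m))) := by
  have hΨ : ∀ i : II,
      ((map (μX k H ∘ₗ (TensorProduct.comm k (X k H) (X k H)).toLinearMap) LinearMap.id)
          ((TensorProduct.assoc k (X k H) (X k H) M).symm
            ((map LinearMap.id (E.coact ∘ₗ E.act))
              ((TensorProduct.assoc k (X k H) (X k H) M)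
                ((map ((TensorProduct.comm k (X k H) (X k H)).toLinearMap ∘ₗ ΔX k H)
                    LinearMap.id) ((((1 : H) ⊗ₜ (𝔅).coord i) ⊗ₜ m)))))) ⊗ₜ[k] (𝔅) i)
      = (map (map (μX k H ∘ₗ (TensorProduct.comm k (X k H) (X k H)).toLinearMap)
            LinearMap.id ∘ₗ
          (TensorProduct.assoc k (X k H) (X k H) M).symm.toLinearMap ∘ₗ
          map LinearMap.id (E.coact ∘ₗ E.act) ∘ₗ
          (TensorProduct.assoc k (X k H) (X k H) M).toLinearMap ∘ₗ
          (TensorProduct.mk k (X k H ⊗[k] X k H) M).flip m ∘ₗ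
          (TensorProduct.comm k (X k H) (X k H)).toLinearMap ∘ₗ
          map (ιD k H) (ιD k H)) LinearMap.id)
        (ΔD k H ((𝔅).coord i) ⊗ₜ (𝔅) i) := fun i => by
    simp only [map_tmul, coe_comp, Function.comp_apply, LinearEquiv.coe_coe, flip_apply,
      mk_apply, id_coe, id_eq, deltaX_iD]
  rw [Finset.sum_congr rfl fun i _ => hΨ i, ← map_sum, deltaD_canel]
  rw [map_sum, map_sum]
  simp only [map_sum, map_tmul, coe_comp, Function.comp_apply, LinearEquiv.coe_coe,
    flip_apply, mk_apply, id_coe, id_eq, comm_tmul, assoc_tmul]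
  exact Finset.sum_congr rfl fun u _ => R2core h ((𝔅) u)
    (E.coact (E.act (((1 : H) ⊗ₜ (𝔅).coord u) ⊗ₜ m)))

end Aux

/-- the induced structures on a Yetter-Drinfeld module over `H ⊗ H^*`
satisfy the right-right Yetter-Drinfeld compatibility over `H`. -/
theorem statement7 {k : Type} [Field k] {H : Type} [Ring H] [Bialgebra k H]
    [FiniteDimensional k H] {M : Type} [AddCommGroup M] [Module k M]
    (E : YDData k H M) (hE : IsYD E) :
    Cond3 (Gdata E) := by
  have hyd := hE.yd
  rw [CondYD] at hyd
  rw [Cond3]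
  apply TensorProduct.ext'
  intro m h
  simp only [Gdata, coe_comp, Function.comp_apply, LinearEquiv.coe_coe, map_tmul, id_coe, id_eq]
  rw [L1core E m (Coalgebra.comul h), R1 E m h]
  rw [← L2 E m h, ← R2 E m h]
  congr 1
  refine Finset.sum_congr rfl fun i _ => ?_
  have := LinearMap.congr_fun hyd ((((1 : H) ⊗ₜ (Basis.ofVectorSpace k H).coord i) ⊗ₜ m))
  simp only [coe_comp, Function.comp_apply, LinearEquiv.coe_coe, map_tmul, id_coe,
    id_eq] at this
  simp only [map_tmul, coe_comp, Function.comp_apply, LinearEquiv.coe_coe, id_coe, id_eq]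
  rw [this]

end YDL
end

section
/- Let $M$ be a left-left Yetter-Drinfeld module over the tensor product bialgebra $H\otimes H^*$, with induced structures as above. Then the right-left Long compatibility holds: $(m\cdot h)_{(-1)}\otimes (m\cdot h)_{(0)} = m_{(-1)}\otimes m_{(0)}\cdot h$ for all $h\in H$, $m\in M$. -/
/- Common setup: Yetter-Drinfeld-Long bimodules over a bialgebra `H`, and
Yetter-Drinfeld modules over the tensor product bialgebra `H ⊗ H^*`. -/

open TensorProduct LinearMap Module

namespace YDL
open TensorProduct LinearMap Module


noncomputable section Aux
open TensorProduct LinearMap Module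
set_option synthInstance.maxHeartbeats 1000000
set_option maxHeartbeats 1000000

variable {k : Type} [Field k] {H : Type} [Ring H] [Bialgebra k H]
variable {M : Type} [AddCommGroup M] [Module k M]

/-- `x ⊗ m ↦ ξX(x ⊗ h) • m`. -/
def Gm (h : H) : X k H ⊗[k] M →ₗ[k] M :=
  (TensorProduct.lid k M).toLinearMap ∘ₗ
    map (ξX k H ∘ₗ (TensorProduct.mk k (X k H) H).flip h) LinearMap.id

lemma Gm_tmul (h : H) (x : X k H) (m : M) :
    Gm (M := M) h (x ⊗ₜ m) = ξX k H (x ⊗ₜ h) • m := by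
  simp [Gm]

lemma gR_tmul (C : M →ₗ[k] X k H ⊗[k] M) (m : M) (h : H) :
    gR C (m ⊗ₜ h) = Gm h (C m) := by
  unfold gR
  simp only [coe_comp, Function.comp_apply, LinearEquiv.coe_coe, map_tmul, id_coe, id_eq]
  induction C m using TensorProduct.induction_on with
  | zero => simp
  | tmul x m' => simp [Gm_tmul]
  | add a b ha hb => simp only [add_tmul, map_add, ha, hb]

/-- helper map for the LHS. -/
def PhiA (h : H) : X k H ⊗[k] (X k H ⊗[k] M) →ₗ[k] H ⊗[k] M :=
  (TensorProduct.lid k (H ⊗[k] M)).toLinearMap ∘ₗ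
    map (ξX k H ∘ₗ (TensorProduct.mk k (X k H) H).flip h)
      (map (πH k H) LinearMap.id)

/-- helper map for the RHS. -/
def PhiB (h : H) : X k H ⊗[k] (X k H ⊗[k] M) →ₗ[k] H ⊗[k] M :=
  map (πH k H) (Gm h)

lemma claimA (C : M →ₗ[k] X k H ⊗[k] M) (h : H) (z : X k H ⊗[k] M) :
    map (πH k H) LinearMap.id (C (Gm h z)) = PhiA h (map LinearMap.id C z) := by
  induction z using TensorProduct.induction_on with
  | zero => simp
  | tmul x m' => simp [Gm_tmul, PhiA]
  | add a b ha hb => simp only [map_add, ha, hb]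

lemma claimB (C : M →ₗ[k] X k H ⊗[k] M) (h : H) (z : X k H ⊗[k] M) :
    map LinearMap.id (gR C)
      ((TensorProduct.assoc k H M H) ((map (πH k H) LinearMap.id z) ⊗ₜ h))
    = PhiB h (map LinearMap.id C z) := by
  induction z using TensorProduct.induction_on with
  | zero => simp
  | tmul x m' => simp [PhiB, gR_tmul]
  | add a b ha hb => simp only [map_add, add_tmul, ha, hb]

variable [FiniteDimensional k H]

lemma applyₗ_app (a : H) (f : Module.Dual k H) : applyₗ (R := k) a f = f a := rfl

lemma eval_pair (v : Module.Dual k H ⊗[k] Module.Dual k H) (a b : H) :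
    LinearMap.mul' k k (map (applyₗ (R := k) a) (applyₗ (R := k) b) v)
      = TensorProduct.dualDistrib k H H v (a ⊗ₜ b) := by
  induction v using TensorProduct.induction_on with
  | zero => simp
  | tmul f g => simp [mul'_apply]
  | add u w hu hw => simp only [map_add, _root_.add_apply, hu, hw, LinearMap.add_apply]

lemma dualDistrib_ΔD (f : Module.Dual k H) :
    TensorProduct.dualDistrib k H H (ΔD k H f) = (LinearMap.mul' k H).dualMap f := by
  have h1 : ∀ y : Module.Dual k (H ⊗[k] H),
      TensorProduct.dualDistrib k H H ((TensorProduct.dualDistribEquiv k H H).symm y) = y :=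
    fun y => (TensorProduct.dualDistribEquiv k H H).apply_symm_apply y
  exact h1 _

lemma evalΔD (f : Module.Dual k H) (a b : H) :
    LinearMap.mul' k k (map (applyₗ (R := k) a) (applyₗ (R := k) b) (ΔD k H f))
      = f (a * b) := by
  rw [eval_pair, dualDistrib_ΔD]
  show f (LinearMap.mul' k H (a ⊗ₜ b)) = f (a * b)
  rw [mul'_apply]

lemma claimC (h : H) (u : H ⊗[k] H) (v : Module.Dual k H ⊗[k] Module.Dual k H) (m : M) :
    PhiA (M := M) h ((TensorProduct.assoc k (X k H) (X k H) M)
        ((tensorTensorTensorComm k H H (Module.Dual k H) (Module.Dual k H) (u ⊗ₜ v)) ⊗ₜ m))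
    = (LinearMap.mul' k k (map (applyₗ (R := k) h) (applyₗ (R := k) (1 : H)) v)) •
        (((TensorProduct.lid k H) (map Coalgebra.counit LinearMap.id u)) ⊗ₜ m) := by
  induction u using TensorProduct.induction_on with
  | zero => simp
  | add u₁ u₂ h1 h2 => simp only [add_tmul, map_add, tmul_add, smul_add, h1, h2, add_tmul]
  | tmul a₁ a₂ =>
    induction v using TensorProduct.induction_on with
    | zero => simp
    | add v₁ v₂ h1 h2 =>
      simp only [tmul_add, add_tmul, map_add, h1, h2, add_smul, LinearMap.add_apply]
    | tmul f₁ f₂ =>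
      simp only [tensorTensorTensorComm_tmul, assoc_tmul, PhiA, ξX, πH, εD, coe_comp,
        Function.comp_apply, map_tmul, LinearEquiv.coe_coe, assoc_tmul, lid_tmul, id_coe,
        id_eq, mul'_apply, contractLeft_apply, flip_apply, mk_apply, applyₗ_app,
        rid_tmul, smul_tmul', smul_smul]
      congr 1
      ring

lemma claimC' (h : H) (u : H ⊗[k] H) (v : Module.Dual k H ⊗[k] Module.Dual k H) (m : M) :
    PhiB (M := M) h ((TensorProduct.assoc k (X k H) (X k H) M)
        ((tensorTensorTensorComm k H H (Module.Dual k H) (Module.Dual k H) (u ⊗ₜ v)) ⊗ₜ m))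
    = (LinearMap.mul' k k (map (applyₗ (R := k) (1 : H)) (applyₗ (R := k) h) v)) •
        (((TensorProduct.rid k H) (map LinearMap.id Coalgebra.counit u)) ⊗ₜ m) := by
  induction u using TensorProduct.induction_on with
  | zero => simp
  | add u₁ u₂ h1 h2 => simp only [add_tmul, map_add, tmul_add, smul_add, h1, h2, add_tmul]
  | tmul a₁ a₂ =>
    induction v using TensorProduct.induction_on with
    | zero => simp
    | add v₁ v₂ h1 h2 =>
      simp only [tmul_add, add_tmul, map_add, h1, h2, add_smul, LinearMap.add_apply]
    | tmul f₁ f₂ =>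
      simp only [tensorTensorTensorComm_tmul, assoc_tmul, PhiB, Gm, ξX, πH, εD, coe_comp,
        Function.comp_apply, map_tmul, LinearEquiv.coe_coe, assoc_tmul, lid_tmul, id_coe,
        id_eq, mul'_apply, contractLeft_apply, flip_apply, mk_apply, applyₗ_app,
        rid_tmul, smul_tmul', tmul_smul, smul_smul]
      congr 1
      ring

lemma claimFinal (h : H) (w : X k H ⊗[k] M) :
    PhiA h ((TensorProduct.assoc k (X k H) (X k H) M) (map (ΔX k H) LinearMap.id w))
    = PhiB h ((TensorProduct.assoc k (X k H) (X k H) M) (map (ΔX k H) LinearMap.id w)) := by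
  induction w using TensorProduct.induction_on with
  | zero => simp
  | add a b ha hb => simp only [map_add, ha, hb]
  | tmul x m =>
    induction x using TensorProduct.induction_on with
    | zero => simp
    | add x₁ x₂ h1 h2 => simp only [add_tmul, map_add, h1, h2]
    | tmul a f =>
      have hx : ΔX k H (a ⊗ₜ f)
          = tensorTensorTensorComm k H H (Module.Dual k H) (Module.Dual k H)
              ((Coalgebra.comul a) ⊗ₜ (ΔD k H f)) := by
        simp [ΔX]
      simp only [map_tmul, id_coe, id_eq, hx]
      rw [claimC, claimC']
      have hc1 : (map (Coalgebra.counit (R := k)) (LinearMap.id (M := H))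
          (Coalgebra.comul a) : k ⊗[k] H) = 1 ⊗ₜ a := Coalgebra.rTensor_counit_comul a
      have hc2 : (map (LinearMap.id (M := H)) (Coalgebra.counit (R := k))
          (Coalgebra.comul a) : H ⊗[k] k) = a ⊗ₜ 1 := Coalgebra.lTensor_counit_comul a
      rw [hc1, hc2, evalΔD, evalΔD]
      simp

end Aux

/-- the induced structures on a Yetter-Drinfeld module over `H ⊗ H^*`
satisfy the right-left Long compatibility. -/
theorem statement8 {k : Type} [Field k] {H : Type} [Ring H] [Bialgebra k H]
    [FiniteDimensional k H] {M : Type} [AddCommGroup M] [Module k M]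
    (E : YDData k H M) (hE : IsYD E) :
    Cond4 (Gdata E) := by
  have hco := hE.xcom.coassoc
  unfold Cond4 Gdata
  apply TensorProduct.ext'
  intro m h
  simp only [coe_comp, Function.comp_apply, LinearEquiv.coe_coe, map_tmul, id_coe, id_eq]
  rw [gR_tmul]
  show map (πH k H) LinearMap.id (E.coact (Gm h (E.coact m))) = _
  rw [claimA]
  have hcoM : (TensorProduct.assoc k (X k H) (X k H) M)
      (map (ΔX k H) LinearMap.id (E.coact m))
      = map LinearMap.id E.coact (E.coact m) := by
    have := congrArg (fun (F : _ →ₗ[k] _) => F m) hco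
    simpa using this
  rw [← hcoM, claimFinal, hcoM]
  rw [← claimB]
  rfl

end YDL
end

section
/- The functor $F:\mathcal{LR}(H)\to{}^{H\otimes H^*}_{H\otimes H^*}\mathcal{YD}$ is compatible with braidings: for $M,N\in\mathcal{LR}(H)$ and $m\in M$, $n\in N$, one has $m_{[-1]}\cdot n\otimes m_{[0]} = m_{(-1)}\cdot n_{\langle 0\rangle}\otimes m_{(0)}\cdot n_{\langle 1\rangle}$, i.e. the Yetter-Drinfeld braiding of ${}^{H\otimes H^*}_{H\otimes H^*}\mathcal{YD}$ restricts to the braiding $c_{M,N}(m\otimes n)=m_{(-1)}\cdot n_{\langle 0\rangle}\otimes m_{(0)}\cdot n_{\langle 1\rangle}$ of $\mathcal{LR}(H)$. -/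
/- Common setup: Yetter-Drinfeld-Long bimodules over a bialgebra `H`, and
Yetter-Drinfeld modules over the tensor product bialgebra `H ⊗ H^*`. -/

open TensorProduct LinearMap Module

namespace YDL
open TensorProduct LinearMap Module

set_option maxHeartbeats 1000000 in
set_option synthInstance.maxHeartbeats 400000 in
/-- the functor `F` is compatible with the braidings:
`m₍₋₁₎·n ⊗ m₍₀₎ = m₍₋₁₎·n₍₀₎ ⊗ m₍₀₎·n₍₁₎`, i.e. the Yetter-Drinfeld braiding over
`H ⊗ H^*` restricts to the braiding of `𝓛𝓡(H)`. -/
theorem statement10 {k : Type} [Field k] {H : Type} [Ring H] [HopfAlgebra k H]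
    [FiniteDimensional k H] {M N : Type} [AddCommGroup M] [Module k M]
    [AddCommGroup N] [Module k N]
    (hbij : Function.Bijective (HopfAlgebra.antipode (R := k) (A := H)))
    (D : LRData k H M) (D' : LRData k H N) (hD : IsLR D) (hD' : IsLR D') :
    cYD (Fco D) (Fact D') = cLR D D' := by
  apply TensorProduct.ext'
  intro m n
  simp only [cYD, cLR, Fco, Fact, evR, insD, LinearMap.comp_apply, LinearEquiv.coe_coe,
    TensorProduct.map_tmul, LinearMap.id_coe, id_eq]
  generalize D.cL m = p
  induction p using TensorProduct.induction_on with
  | zero => simp only [TensorProduct.zero_tmul, map_zero]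
  | add p1 p2 h1 h2 => simp only [TensorProduct.add_tmul, map_add, h1, h2]
  | tmul a m₀ =>
    rw [show canel k H = _ from coevaluation_apply_one k H]
    simp only [TensorProduct.mk_apply, map_sum, LinearMap.sum_apply,
      TensorProduct.sum_tmul, TensorProduct.tmul_sum, TensorProduct.map_tmul,
      TensorProduct.assoc_tmul, TensorProduct.assoc_symm_tmul, TensorProduct.comm_tmul,
      LinearMap.comp_apply, LinearEquiv.coe_coe, LinearMap.id_coe, id_eq,
      TensorProduct.lid_tmul]
    generalize D'.cR n = q
    induction q using TensorProduct.induction_on with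
    | zero =>
      simp only [map_zero, TensorProduct.tmul_zero, TensorProduct.zero_tmul, map_zero,
        Finset.sum_const_zero]
    | add q1 q2 g1 g2 =>
      simp only [map_add, TensorProduct.tmul_add, TensorProduct.add_tmul, map_add,
        Finset.sum_add_distrib, g1, g2]
    | tmul n₀ x =>
      simp only [TensorProduct.comm_tmul, TensorProduct.assoc_symm_tmul,
        TensorProduct.map_tmul, contractLeft_apply, TensorProduct.lid_tmul,
        LinearMap.id_coe, id_eq, TensorProduct.tensorTensorTensorComm_tmul]
      conv_rhs => rw [← Basis.sum_repr (Basis.ofVectorSpace k H) x]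
      simp only [map_sum, TensorProduct.tmul_sum, TensorProduct.sum_tmul, map_smul,
        TensorProduct.tmul_smul, TensorProduct.smul_tmul, Basis.coord_apply]

end YDL
end

section
/- Let $H$ be a Hopf algebra with bijective antipode $S$. The braiding $c_{M,N}(m\otimes n)=m_{(-1)}\cdot n_{\langle 0\rangle}\otimes m_{(0)}\cdot n_{\langle 1\rangle}$ on the category of Yetter-Drinfeld-Long bimodules has inverse $c^{-1}_{M,N}(n\otimes m)=m_{(0)}\cdot S^{-1}(n_{\langle 1\rangle})\otimes S^{-1}(m_{(-1)})\cdot n_{\langle 0\rangle}$, i.e. $c^{-1}_{M,N}\circ c_{M,N}=\mathrm{id}_{M\otimes N}$ and $c_{M,N}\circ c^{-1}_{M,N}=\mathrm{id}_{N\otimes M}$. -/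
/- Common setup: Yetter-Drinfeld-Long bimodules over a bialgebra `H`, and
Yetter-Drinfeld modules over the tensor product bialgebra `H ⊗ H^*`. -/

open TensorProduct LinearMap Module

namespace YDL
open TensorProduct LinearMap Module

/-! ### Auxiliary material for statement11 -/

section Statement11Aux

open Coalgebra HopfAlgebra

variable {k : Type} [Field k] {H : Type} [Ring H]

section AntipodeFacts
variable [HopfAlgebra k H]

local notation "𝒮" => (HopfAlgebra.antipode (R := k) (A := H))

lemma aux_sum_counit_smul {a : H} {ι : Type*} (r : Coalgebra.Repr k a ι) :
    ∑ i ∈ r.index, Coalgebra.counit (R := k) (r.left i) • r.right i = a := by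
  have h := congrArg (TensorProduct.lid k H) (Coalgebra.sum_counit_tmul_eq r)
  rw [map_sum] at h
  simp only [lid_tmul] at h
  simpa using h

lemma aux_sum_smul_counit {a : H} {ι : Type*} (r : Coalgebra.Repr k a ι) :
    ∑ i ∈ r.index, Coalgebra.counit (R := k) (r.right i) • r.left i = a := by
  have h := congrArg (TensorProduct.rid k H) (Coalgebra.sum_tmul_counit_eq r)
  rw [map_sum] at h
  simp only [rid_tmul] at h
  simpa using h

/-- A representation of `comul (c * d)` from representations of `c` and `d`. -/
def auxMulRepr {c d : H} {ι κ : Type*} (rc : Coalgebra.Repr k c ι) (rd : Coalgebra.Repr k d κ) :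
    Coalgebra.Repr k (c * d) (ι × κ) where
  index := rc.index ×ˢ rd.index
  left := fun ij => rc.left ij.1 * rd.left ij.2
  right := fun ij => rc.right ij.1 * rd.right ij.2
  eq := by
    rw [Finset.sum_product]
    rw [Bialgebra.comul_mul, ← rc.eq, ← rd.eq, Finset.sum_mul_sum]
    simp [Algebra.TensorProduct.tmul_mul_tmul]

noncomputable def auxM3 : H ⊗[k] (H ⊗[k] H) →ₗ[k] H := LinearMap.mul' k H ∘ₗ (LinearMap.mul' k H).lTensor H

@[simp] lemma auxM3_tmul (x y z : H) :
    auxM3 (k := k) (H := H) (x ⊗ₜ (y ⊗ₜ z)) = x * (y * z) := by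
  simp [auxM3]

noncomputable def auxG : (H ⊗[k] (H ⊗[k] H)) ⊗[k] (H ⊗[k] (H ⊗[k] H)) →ₗ[k] H :=
  auxM3 ∘ₗ
  TensorProduct.map (𝒮 ∘ₗ LinearMap.mul' k H)
    (TensorProduct.map (LinearMap.mul' k H)
      (LinearMap.mul' k H ∘ₗ TensorProduct.map 𝒮 𝒮)) ∘ₗ
  TensorProduct.map LinearMap.id
    ((TensorProduct.map LinearMap.id (TensorProduct.comm k H H).toLinearMap) ∘ₗ
      (tensorTensorTensorComm k H H H H).toLinearMap) ∘ₗ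
  (tensorTensorTensorComm k H (H ⊗[k] H) H (H ⊗[k] H)).toLinearMap

@[simp] lemma auxG_tmul (x y z u v w : H) :
    auxG (k := k) (H := H) ((x ⊗ₜ (y ⊗ₜ z)) ⊗ₜ (u ⊗ₜ (v ⊗ₜ w)))
      = 𝒮 (x*u) * ((y*v) * (𝒮 w * 𝒮 z)) := by
  simp [auxG, tensorTensorTensorComm_tmul]

lemma aux_antipode_mul (a b : H) : 𝒮 (a * b) = 𝒮 b * 𝒮 a := by
  classical
  obtain ⟨ra⟩ : Nonempty (Coalgebra.Repr k a (H × H)) := ⟨ℛ k a⟩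
  obtain ⟨rb⟩ : Nonempty (Coalgebra.Repr k b (H × H)) := ⟨ℛ k b⟩
  set ra1 : ∀ i : H × H, Coalgebra.Repr k (ra.left i) (H × H) := fun i => ℛ k _ with hra1
  set ra2 : ∀ i : H × H, Coalgebra.Repr k (ra.right i) (H × H) := fun i => ℛ k _ with hra2
  set rb1 : ∀ j : H × H, Coalgebra.Repr k (rb.left j) (H × H) := fun j => ℛ k _ with hrb1
  set rb2 : ∀ j : H × H, Coalgebra.Repr k (rb.right j) (H × H) := fun j => ℛ k _ with hrb2
  set Ta : H ⊗[k] (H ⊗[k] H) :=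
    ∑ i ∈ ra.index, ∑ q ∈ (ra2 i).index,
      ra.left i ⊗ₜ ((ra2 i).left q ⊗ₜ (ra2 i).right q) with hTa
  set Tb : H ⊗[k] (H ⊗[k] H) :=
    ∑ j ∈ rb.index, ∑ p ∈ (rb2 j).index,
      rb.left j ⊗ₜ ((rb2 j).left p ⊗ₜ (rb2 j).right p) with hTb
  have hTa' : Ta = ∑ i ∈ ra.index, ∑ q ∈ (ra1 i).index,
      (ra1 i).left q ⊗ₜ ((ra1 i).right q ⊗ₜ ra.right i) :=
    (Coalgebra.sum_tmul_tmul_eq ra ra1 ra2).symm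
  have hTb' : Tb = ∑ j ∈ rb.index, ∑ p ∈ (rb1 j).index,
      (rb1 j).left p ⊗ₜ ((rb1 j).right p ⊗ₜ rb.right j) :=
    (Coalgebra.sum_tmul_tmul_eq rb rb1 rb2).symm
  have pathA : auxG (Ta ⊗ₜ Tb) = 𝒮 (a * b) := by
    rw [hTa, hTb]
    simp only [sum_tmul]
    simp only [tmul_sum]
    simp only [map_sum, auxG_tmul]
    have hb : ∀ x y z : H, ∑ j ∈ rb.index, ∑ p ∈ (rb2 j).index,
        𝒮 (x * rb.left j) * ((y * (rb2 j).left p) * (𝒮 ((rb2 j).right p) * 𝒮 z))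
        = 𝒮 (x * b) * (y * 𝒮 z) := by
      intro x y z
      have h1 : ∀ j ∈ rb.index, ∑ p ∈ (rb2 j).index,
          𝒮 (x * rb.left j) * ((y * (rb2 j).left p) * (𝒮 ((rb2 j).right p) * 𝒮 z))
          = Coalgebra.counit (R := k) (rb.right j) • (𝒮 (x * rb.left j) * (y * 𝒮 z)) := by
        intro j _
        rw [← Finset.mul_sum]
        have inner : (∑ p ∈ (rb2 j).index,
            (y * (rb2 j).left p) * (𝒮 ((rb2 j).right p) * 𝒮 z))
            = Coalgebra.counit (R := k) (rb.right j) • (y * 𝒮 z) := by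
          have inner2 : (∑ p ∈ (rb2 j).index,
              (rb2 j).left p * (𝒮 ((rb2 j).right p) * 𝒮 z))
              = Coalgebra.counit (R := k) (rb.right j) • 𝒮 z := by
            simp only [← mul_assoc, ← Finset.sum_mul,
              HopfAlgebra.sum_mul_antipode_eq_smul (rb2 j), smul_mul_assoc, one_mul]
          simp only [mul_assoc, ← Finset.mul_sum, inner2, mul_smul_comm]
        rw [inner]
        simp [mul_smul_comm]
      rw [Finset.sum_congr rfl h1]
      conv_rhs => rw [← aux_sum_smul_counit rb]
      rw [Finset.mul_sum, map_sum, Finset.sum_mul]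
      simp [mul_smul_comm, smul_mul_assoc]
    rw [Finset.sum_congr rfl (fun i _ => Finset.sum_congr rfl (fun q _ =>
      hb (ra.left i) ((ra2 i).left q) ((ra2 i).right q)))]
    have h2 : ∀ i ∈ ra.index, ∑ q ∈ (ra2 i).index,
        𝒮 (ra.left i * b) * ((ra2 i).left q * 𝒮 ((ra2 i).right q))
        = Coalgebra.counit (R := k) (ra.right i) • 𝒮 (ra.left i * b) := by
      intro i _
      rw [← Finset.mul_sum, HopfAlgebra.sum_mul_antipode_eq_smul (ra2 i)]
      simp [mul_smul_comm]
    rw [Finset.sum_congr rfl h2]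
    conv_rhs => rw [← aux_sum_smul_counit ra]
    rw [Finset.sum_mul, map_sum]
    simp [smul_mul_assoc]
  have pathB : auxG (Ta ⊗ₜ Tb) = 𝒮 b * 𝒮 a := by
    rw [hTa', hTb']
    simp only [sum_tmul]
    simp only [tmul_sum]
    simp only [map_sum, auxG_tmul]
    rw [Finset.sum_congr rfl (fun i (_ : i ∈ ra.index) => Finset.sum_comm)]
    have hij : ∀ i ∈ ra.index, ∀ j ∈ rb.index,
        ∑ q ∈ (ra1 i).index, ∑ p ∈ (rb1 j).index,
          𝒮 ((ra1 i).left q * (rb1 j).left p) *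
            (((ra1 i).right q * (rb1 j).right p) * (𝒮 (rb.right j) * 𝒮 (ra.right i)))
        = (Coalgebra.counit (R := k) (ra.left i) * Coalgebra.counit (R := k) (rb.left j)) •
            (𝒮 (rb.right j) * 𝒮 (ra.right i)) := by
      intro i _ j _
      have hmul := HopfAlgebra.sum_antipode_mul_eq_smul (auxMulRepr (ra1 i) (rb1 j))
      simp only [auxMulRepr] at hmul
      rw [Finset.sum_product] at hmul
      simp only [← mul_assoc] at hmul ⊢
      simp only [← Finset.sum_mul]
      rw [hmul, Bialgebra.counit_mul]
      simp [smul_mul_assoc, mul_assoc]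
    rw [Finset.sum_congr rfl (fun i hi => Finset.sum_congr rfl (fun j hj => hij i hi j hj))]
    have hj : ∀ i ∈ ra.index, ∑ j ∈ rb.index,
        (Coalgebra.counit (R := k) (ra.left i) * Coalgebra.counit (R := k) (rb.left j)) •
          (𝒮 (rb.right j) * 𝒮 (ra.right i))
        = Coalgebra.counit (R := k) (ra.left i) • (𝒮 b * 𝒮 (ra.right i)) := by
      intro i _
      simp only [mul_smul, ← Finset.smul_sum]
      congr 1
      rw [show (∑ j ∈ rb.index, Coalgebra.counit (R := k) (rb.left j) •
          (𝒮 (rb.right j) * 𝒮 (ra.right i)))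
          = (∑ j ∈ rb.index, Coalgebra.counit (R := k) (rb.left j) • 𝒮 (rb.right j)) *
            𝒮 (ra.right i) from by rw [Finset.sum_mul]; simp [smul_mul_assoc]]
      rw [show (∑ j ∈ rb.index, Coalgebra.counit (R := k) (rb.left j) • 𝒮 (rb.right j)) = 𝒮 b
        from by simp only [← map_smul, ← map_sum, aux_sum_counit_smul rb]]
    rw [Finset.sum_congr rfl hj]
    rw [show (∑ i ∈ ra.index, Coalgebra.counit (R := k) (ra.left i) • (𝒮 b * 𝒮 (ra.right i)))
        = 𝒮 b * ∑ i ∈ ra.index, Coalgebra.counit (R := k) (ra.left i) • 𝒮 (ra.right i) from by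
      rw [Finset.mul_sum]; simp [mul_smul_comm]]
    rw [show (∑ i ∈ ra.index, Coalgebra.counit (R := k) (ra.left i) • 𝒮 (ra.right i)) = 𝒮 a
      from by simp only [← map_smul, ← map_sum, aux_sum_counit_smul ra]]
  rw [← pathA, pathB]

end AntipodeFacts

end Statement11Aux

section Statement11Aux2

open Coalgebra

variable {k : Type} [Field k] {H : Type} [Ring H]

section RhoLam
variable [HopfAlgebra k H]

/-- `h ⊗ h' ↦ T h' * h`. -/
noncomputable def auxRho (T : H →ₗ[k] H) : H ⊗[k] H →ₗ[k] H :=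
  LinearMap.mul' k H ∘ₗ map T LinearMap.id ∘ₗ (TensorProduct.comm k H H).toLinearMap

/-- `h ⊗ h' ↦ h' * T h`. -/
noncomputable def auxLam (T : H →ₗ[k] H) : H ⊗[k] H →ₗ[k] H :=
  LinearMap.mul' k H ∘ₗ map LinearMap.id T ∘ₗ (TensorProduct.comm k H H).toLinearMap

@[simp] lemma auxRho_tmul (T : H →ₗ[k] H) (a d : H) : auxRho T (a ⊗ₜ d) = T d * a := by
  simp [auxRho]

@[simp] lemma auxLam_tmul (T : H →ₗ[k] H) (c b : H) : auxLam T (c ⊗ₜ b) = b * T c := by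
  simp [auxLam]

variable (T : H →ₗ[k] H)
  (hT1 : T ∘ₗ (HopfAlgebra.antipode (R := k) (A := H)) = LinearMap.id)
  (hT2 : (HopfAlgebra.antipode (R := k) (A := H)) ∘ₗ T = LinearMap.id)

include hT1 hT2

lemma aux_antipode_one : HopfAlgebra.antipode (R := k) (1 : H) = 1 := by
  have h := HopfAlgebra.mul_antipode_rTensor_comul_apply (R := k) (1 : H)
  simpa [Algebra.TensorProduct.one_def] using h

lemma aux_rho_comul :
    auxRho T ∘ₗ (Coalgebra.comul (R := k) (A := H))
      = Algebra.linearMap k H ∘ₗ Coalgebra.counit := by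
  have hTS : ∀ x : H, T (HopfAlgebra.antipode (R := k) x) = x :=
    fun x => LinearMap.congr_fun hT1 x
  have hST : ∀ x : H, HopfAlgebra.antipode (R := k) (T x) = x :=
    fun x => LinearMap.congr_fun hT2 x
  have hSinj : Function.Injective (HopfAlgebra.antipode (R := k) (A := H)) :=
    Function.LeftInverse.injective hTS
  have hS1 : HopfAlgebra.antipode (R := k) (1 : H) = 1 := aux_antipode_one T hT1 hT2
  apply LinearMap.ext; intro h
  apply hSinj
  obtain ⟨r⟩ : Nonempty (Coalgebra.Repr k h (H × H)) := ⟨ℛ k h⟩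
  simp only [LinearMap.comp_apply, auxRho]
  rw [← r.eq]
  simp only [map_sum, comm_tmul, map_tmul, LinearMap.mul'_apply, LinearMap.id_coe, id_eq,
    LinearEquiv.coe_coe]
  simp only [aux_antipode_mul, hST]
  rw [HopfAlgebra.sum_antipode_mul_eq_algebraMap_counit r]
  simp [Algebra.linearMap_apply, Algebra.algebraMap_eq_smul_one, map_smul, hS1]

lemma aux_lam_comul :
    auxLam T ∘ₗ (Coalgebra.comul (R := k) (A := H))
      = Algebra.linearMap k H ∘ₗ Coalgebra.counit := by
  have hTS : ∀ x : H, T (HopfAlgebra.antipode (R := k) x) = x :=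
    fun x => LinearMap.congr_fun hT1 x
  have hST : ∀ x : H, HopfAlgebra.antipode (R := k) (T x) = x :=
    fun x => LinearMap.congr_fun hT2 x
  have hSinj : Function.Injective (HopfAlgebra.antipode (R := k) (A := H)) :=
    Function.LeftInverse.injective hTS
  have hS1 : HopfAlgebra.antipode (R := k) (1 : H) = 1 := aux_antipode_one T hT1 hT2
  apply LinearMap.ext; intro h
  apply hSinj
  obtain ⟨r⟩ : Nonempty (Coalgebra.Repr k h (H × H)) := ⟨ℛ k h⟩
  simp only [LinearMap.comp_apply, auxLam]
  rw [← r.eq]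
  simp only [map_sum, comm_tmul, map_tmul, LinearMap.mul'_apply, LinearMap.id_coe, id_eq,
    LinearEquiv.coe_coe]
  simp only [aux_antipode_mul, hST]
  rw [HopfAlgebra.sum_mul_antipode_eq_algebraMap_counit r]
  simp [Algebra.linearMap_apply, Algebra.algebraMap_eq_smul_one, map_smul, hS1]

end RhoLam

end Statement11Aux2

section Statement11Aux3

variable {k : Type} [Field k] {H : Type} [Ring H] [Bialgebra k H]

/-- The inner shuffle of the inverse braiding:
`(w ⊗ c) ⊗ (d ⊗ z) ↦ (z ⊗ T c) ⊗ (T d ⊗ w)`. -/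
noncomputable def auxGamma (T : H →ₗ[k] H) (P Q : Type) [AddCommGroup P] [Module k P]
    [AddCommGroup Q] [Module k Q] :
    (P ⊗[k] H) ⊗[k] (H ⊗[k] Q) →ₗ[k] (Q ⊗[k] H) ⊗[k] (H ⊗[k] P) :=
  (TensorProduct.comm k (H ⊗[k] P) (Q ⊗[k] H)).toLinearMap ∘ₗ
  (tensorTensorTensorComm k H Q P H).toLinearMap ∘ₗ
  (TensorProduct.comm k (P ⊗[k] H) (H ⊗[k] Q)).toLinearMap ∘ₗ
  map (map LinearMap.id T) (map T LinearMap.id)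

@[simp] lemma auxGamma_tmul (T : H →ₗ[k] H) {P Q : Type} [AddCommGroup P] [Module k P]
    [AddCommGroup Q] [Module k Q] (w : P) (c : H) (d : H) (z : Q) :
    auxGamma T P Q ((w ⊗ₜ c) ⊗ₜ (d ⊗ₜ z)) = (z ⊗ₜ T c) ⊗ₜ (T d ⊗ₜ w) := by
  simp [auxGamma, tensorTensorTensorComm_tmul]

lemma auxGamma_nat (T : H →ₗ[k] H) {P Q P' Q' : Type} [AddCommGroup P] [Module k P]
    [AddCommGroup Q] [Module k Q] [AddCommGroup P'] [Module k P']
    [AddCommGroup Q'] [Module k Q'] (f : Q →ₗ[k] Q') (g : P →ₗ[k] P') :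
    map (map f LinearMap.id) (map LinearMap.id g) ∘ₗ auxGamma T P Q
      = auxGamma T P' Q' ∘ₗ map (map g LinearMap.id) (map LinearMap.id f) := by
  apply TensorProduct.ext_fourfold'
  intro w c d z
  simp

end Statement11Aux3

set_option maxHeartbeats 3200000 in
/-- the braiding `c(m ⊗ n) = m₍₋₁₎·n₍₀₎ ⊗ m₍₀₎·n₍₁₎` of the category of
Yetter-Drinfeld-Long bimodules has inverse
`c⁻¹(n ⊗ m) = m₍₀₎·S⁻¹(n₍₁₎) ⊗ S⁻¹(m₍₋₁₎)·n₍₀₎`. -/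
theorem statement11 {k : Type} [Field k] {H : Type} [Ring H] [HopfAlgebra k H]
    {M N : Type} [AddCommGroup M] [Module k M] [AddCommGroup N] [Module k N]
    (T : H →ₗ[k] H) (hT1 : T ∘ₗ (HopfAlgebra.antipode (R := k) (A := H)) = LinearMap.id)
    (hT2 : (HopfAlgebra.antipode (R := k) (A := H)) ∘ₗ T = LinearMap.id)
    (D : LRData k H M) (D' : LRData k H N) (hD : IsLR D) (hD' : IsLR D') :
    cLRinv D D' T ∘ₗ cLR D D' = LinearMap.id ∧
    cLR D D' ∘ₗ cLRinv D D' T = LinearMap.id :=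
    by
  have hcLRinv : cLRinv D D' T
      = map D.aR D'.aL ∘ₗ auxGamma T N M ∘ₗ map D'.cR D.cL := rfl
  have e3 : ∀ m : M, (map LinearMap.id D.cL) (D.cL m)
      = (TensorProduct.assoc k H H M) ((map Coalgebra.comul LinearMap.id) (D.cL m)) := by
    intro m
    have h := LinearMap.congr_fun hD.lcom.coassoc m
    simp only [comp_apply, LinearEquiv.coe_coe] at h
    exact h.symm
  have e4 : ∀ n : N, (map D'.cR LinearMap.id) (D'.cR n)
      = (TensorProduct.assoc k N H H).symm ((map LinearMap.id Coalgebra.comul) (D'.cR n)) := by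
    intro n
    have h := LinearMap.congr_fun hD'.rcom.coassoc n
    simp only [comp_apply, LinearEquiv.coe_coe] at h
    rw [← h, LinearEquiv.symm_apply_apply]
  have eCM : ∀ m : M, (map Coalgebra.counit (LinearMap.id : M →ₗ[k] M)) (D.cL m)
      = (1:k) ⊗ₜ[k] m := by
    intro m
    have hε := LinearMap.congr_fun hD.lcom.counit m
    simp only [comp_apply, LinearEquiv.coe_coe, id_coe, id_eq] at hε
    apply (TensorProduct.lid k M).injective
    rw [hε]; simp
  have eCN : ∀ n : N, (map (LinearMap.id : N →ₗ[k] N) Coalgebra.counit) (D'.cR n)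
      = n ⊗ₜ[k] (1:k) := by
    intro n
    have hε := LinearMap.congr_fun hD'.rcom.counit n
    simp only [comp_apply, LinearEquiv.coe_coe, id_coe, id_eq] at hε
    apply (TensorProduct.rid k N).injective
    rw [hε]; simp
  have e6rho : ∀ m : M, (map (auxRho T) LinearMap.id)
      ((map Coalgebra.comul LinearMap.id) (D.cL m)) = (1:H) ⊗ₜ[k] m := by
    intro m
    have hsplit : map (auxRho T) (LinearMap.id : M →ₗ[k] M) ∘ₗ map Coalgebra.comul LinearMap.id
        = map (Algebra.linearMap k H) LinearMap.id ∘ₗ map Coalgebra.counit LinearMap.id := by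
      rw [← TensorProduct.map_comp, ← TensorProduct.map_comp, aux_rho_comul T hT1 hT2]
    have h := LinearMap.congr_fun hsplit (D.cL m)
    simp only [comp_apply] at h
    rw [h, eCM m]
    simp
  have e6lam : ∀ m : M, (map (auxLam T) LinearMap.id)
      ((map Coalgebra.comul LinearMap.id) (D.cL m)) = (1:H) ⊗ₜ[k] m := by
    intro m
    have hsplit : map (auxLam T) (LinearMap.id : M →ₗ[k] M) ∘ₗ map Coalgebra.comul LinearMap.id
        = map (Algebra.linearMap k H) LinearMap.id ∘ₗ map Coalgebra.counit LinearMap.id := by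
      rw [← TensorProduct.map_comp, ← TensorProduct.map_comp, aux_lam_comul T hT1 hT2]
    have h := LinearMap.congr_fun hsplit (D.cL m)
    simp only [comp_apply] at h
    rw [h, eCM m]
    simp
  have e7lam : ∀ n : N, (map LinearMap.id (auxLam T))
      ((map LinearMap.id Coalgebra.comul) (D'.cR n)) = n ⊗ₜ[k] (1:H) := by
    intro n
    have hsplit : map (LinearMap.id : N →ₗ[k] N) (auxLam T) ∘ₗ map LinearMap.id Coalgebra.comul
        = map LinearMap.id (Algebra.linearMap k H) ∘ₗ map LinearMap.id Coalgebra.counit := by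
      rw [← TensorProduct.map_comp, ← TensorProduct.map_comp, aux_lam_comul T hT1 hT2]
    have h := LinearMap.congr_fun hsplit (D'.cR n)
    simp only [comp_apply] at h
    rw [h, eCN n]
    simp
  have e7rho : ∀ n : N, (map LinearMap.id (auxRho T))
      ((map LinearMap.id Coalgebra.comul) (D'.cR n)) = n ⊗ₜ[k] (1:H) := by
    intro n
    have hsplit : map (LinearMap.id : N →ₗ[k] N) (auxRho T) ∘ₗ map LinearMap.id Coalgebra.comul
        = map LinearMap.id (Algebra.linearMap k H) ∘ₗ map LinearMap.id Coalgebra.counit := by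
      rw [← TensorProduct.map_comp, ← TensorProduct.map_comp, aux_rho_comul T hT1 hT2]
    have h := LinearMap.congr_fun hsplit (D'.cR n)
    simp only [comp_apply] at h
    rw [h, eCN n]
    simp
  constructor
  · -- `c⁻¹ ∘ c = id`
    have K1 : cLRinv D D' T ∘ₗ map D'.aL D.aR ∘ₗ (tensorTensorTensorComm k H M N H).toLinearMap
        = (map D.aR D'.aL ∘ₗ auxGamma T N M ∘ₗ
            map (map D'.aL LinearMap.id ∘ₗ (TensorProduct.assoc k H N H).symm.toLinearMap)
                (map LinearMap.id D.aR ∘ₗ (TensorProduct.assoc k H M H).toLinearMap)) ∘ₗ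
          (tensorTensorTensorComm k H (H ⊗[k] M) (N ⊗[k] H) H).toLinearMap ∘ₗ
          map (map LinearMap.id D.cL) (map D'.cR LinearMap.id) := by
      apply TensorProduct.ext_fourfold'
      intro a u v b
      have c2 := LinearMap.congr_fun hD'.cond2 (a ⊗ₜ v)
      have c4 := LinearMap.congr_fun hD.cond4 (u ⊗ₜ b)
      simp only [comp_apply, map_tmul, LinearEquiv.coe_coe, id_coe, id_eq] at c2 c4
      simp only [hcLRinv, comp_apply, map_tmul, LinearEquiv.coe_coe, id_coe, id_eq,
        tensorTensorTensorComm_tmul]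
      rw [c2, c4]
    have K2 : (map D.aR D'.aL ∘ₗ auxGamma T N M ∘ₗ
            map (map D'.aL LinearMap.id ∘ₗ (TensorProduct.assoc k H N H).symm.toLinearMap)
                (map LinearMap.id D.aR ∘ₗ (TensorProduct.assoc k H M H).toLinearMap)) ∘ₗ
          (tensorTensorTensorComm k H (H ⊗[k] M) (N ⊗[k] H) H).toLinearMap ∘ₗ
          map (TensorProduct.assoc k H H M).toLinearMap
              (TensorProduct.assoc k N H H).symm.toLinearMap
        = ((TensorProduct.comm k N M).toLinearMap ∘ₗ map D'.aL D.aR ∘ₗ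
            (tensorTensorTensorComm k H M N H).toLinearMap) ∘ₗ
          map (map (auxRho T) LinearMap.id) (map LinearMap.id (auxLam T)) := by
      apply TensorProduct.ext_fourfold'
      intro ad z w cb
      induction ad using TensorProduct.induction_on with
      | zero => simp
      | add x₁ x₂ h1 h2 => simp only [tmul_add, add_tmul, map_add, h1, h2]
      | tmul a d =>
        induction cb using TensorProduct.induction_on with
        | zero => simp
        | add x₁ x₂ h1 h2 => simp only [tmul_add, add_tmul, map_add, h1, h2]
        | tmul c b =>
          simp only [comp_apply, map_tmul, LinearEquiv.coe_coe, id_coe, id_eq,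
            TensorProduct.assoc_tmul, TensorProduct.assoc_symm_tmul, comm_tmul,
            tensorTensorTensorComm_tmul, auxGamma_tmul, auxRho_tmul, auxLam_tmul,
            hD.rmod.act_mul, hD'.lmod.mul_act]
    apply TensorProduct.ext'
    intro m n
    have e2 := LinearMap.congr_fun K1 (D.cL m ⊗ₜ D'.cR n)
    have e5 := LinearMap.congr_fun K2 (((map Coalgebra.comul LinearMap.id) (D.cL m)) ⊗ₜ
      ((map LinearMap.id Coalgebra.comul) (D'.cR n)))
    simp only [comp_apply, map_tmul, LinearEquiv.coe_coe] at e2 e5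
    simp only [comp_apply, cLR, LinearEquiv.coe_coe, id_coe, id_eq, map_tmul]
    rw [e2, e3 m, e4 n, e5, e6rho m, e7lam n]
    simp only [comp_apply, map_tmul, LinearEquiv.coe_coe, tensorTensorTensorComm_tmul,
      comm_tmul, hD'.lmod.one_act, hD.rmod.act_one]
  · -- `c ∘ c⁻¹ = id`
    have K1b : cLR D D' ∘ₗ map D.aR D'.aL
        = (map D'.aL D.aR ∘ₗ (tensorTensorTensorComm k H M N H).toLinearMap ∘ₗ
            map (map LinearMap.id D.aR ∘ₗ (TensorProduct.assoc k H M H).toLinearMap)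
                (map D'.aL LinearMap.id ∘ₗ (TensorProduct.assoc k H N H).symm.toLinearMap)) ∘ₗ
          map (map D.cL LinearMap.id) (map LinearMap.id D'.cR) := by
      apply TensorProduct.ext_fourfold'
      intro z c d w
      have c4 := LinearMap.congr_fun hD.cond4 (z ⊗ₜ c)
      have c2 := LinearMap.congr_fun hD'.cond2 (d ⊗ₜ w)
      simp only [comp_apply, map_tmul, LinearEquiv.coe_coe, id_coe, id_eq] at c2 c4
      simp only [cLR, comp_apply, map_tmul, LinearEquiv.coe_coe, id_coe, id_eq]
      rw [c2, c4]
    have K2b : (map D'.aL D.aR ∘ₗ (tensorTensorTensorComm k H M N H).toLinearMap ∘ₗ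
            map (map LinearMap.id D.aR ∘ₗ (TensorProduct.assoc k H M H).toLinearMap)
                (map D'.aL LinearMap.id ∘ₗ (TensorProduct.assoc k H N H).symm.toLinearMap)) ∘ₗ
          auxGamma T (N ⊗[k] H) (H ⊗[k] M) ∘ₗ
          map (TensorProduct.assoc k N H H).symm.toLinearMap
              (TensorProduct.assoc k H H M).toLinearMap
        = ((map D'.aL D.aR ∘ₗ (tensorTensorTensorComm k H M N H).toLinearMap ∘ₗ
            (TensorProduct.comm k (N ⊗[k] H) (H ⊗[k] M)).toLinearMap) ∘ₗ
          map (map LinearMap.id (auxRho T)) (map (auxLam T) LinearMap.id)) := by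
      apply TensorProduct.ext_fourfold'
      intro w cb ad z
      induction cb using TensorProduct.induction_on with
      | zero => simp
      | add x₁ x₂ h1 h2 => simp only [tmul_add, add_tmul, map_add, h1, h2]
      | tmul c b =>
        induction ad using TensorProduct.induction_on with
        | zero => simp
        | add x₁ x₂ h1 h2 => simp only [tmul_add, add_tmul, map_add, h1, h2]
        | tmul a d =>
          simp only [comp_apply, map_tmul, LinearEquiv.coe_coe, id_coe, id_eq,
            TensorProduct.assoc_tmul, TensorProduct.assoc_symm_tmul, comm_tmul,
            tensorTensorTensorComm_tmul, auxGamma_tmul, auxRho_tmul, auxLam_tmul,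
            hD.rmod.act_mul, hD'.lmod.mul_act]
    apply TensorProduct.ext'
    intro n m
    have f1 : cLRinv D D' T (n ⊗ₜ m)
        = (map D.aR D'.aL) (auxGamma T N M (D'.cR n ⊗ₜ D.cL m)) := by
      rw [hcLRinv]; simp only [comp_apply, map_tmul]
    have e2b := LinearMap.congr_fun K1b (auxGamma T N M (D'.cR n ⊗ₜ D.cL m))
    have nat := LinearMap.congr_fun (auxGamma_nat T D.cL D'.cR) (D'.cR n ⊗ₜ D.cL m)
    have e5b := LinearMap.congr_fun K2b (((map LinearMap.id Coalgebra.comul) (D'.cR n)) ⊗ₜ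
      ((map Coalgebra.comul LinearMap.id) (D.cL m)))
    simp only [comp_apply, map_tmul, LinearEquiv.coe_coe] at e2b nat e5b
    simp only [comp_apply, id_coe, id_eq]
    rw [f1, e2b, nat, e4 n, e3 m, e5b, e7rho n, e6lam m]
    simp only [comp_apply, map_tmul, LinearEquiv.coe_coe, tensorTensorTensorComm_tmul,
      comm_tmul, hD'.lmod.one_act, hD.rmod.act_one]


end YDL
end

section
/- Let $H$ be a finite-dimensional bialgebra and $M$, $N$ Yetter-Drinfeld-Long bimodules over $H$. The $H\otimes H^*$-comodule structure on $M\otimes N$ induced by $F$ from the $\mathcal{LR}(H)$ tensor structure coincides with the codiagonal coaction on $F(M)\otimes F(N)$: $\sum_i (m\otimes n)_{(-1)}\otimes h^i\otimes (m\otimes n)_{(0)}\cdot h_i = m_{[-1]}n_{[-1]}\otimes m_{[0]}\otimes n_{[0]}$, where $m_{[-1]}\otimes m_{[0]} = \sum_i m_{(-1)}\otimes h^i\otimes m_{(0)}\cdot h_i$. -/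
/- Common setup: Yetter-Drinfeld-Long bimodules over a bialgebra `H`, and
Yetter-Drinfeld modules over the tensor product bialgebra `H ⊗ H^*`. -/

open TensorProduct LinearMap Module

namespace YDL
open TensorProduct LinearMap Module


noncomputable section
variable {k : Type} [Field k] {H : Type} [Ring H] [Bialgebra k H]
  [FiniteDimensional k H] {M N : Type} [AddCommGroup M] [Module k M]
  [AddCommGroup N] [Module k N]

local notation "b" => Basis.ofVectorSpace k H

set_option synthInstance.maxHeartbeats 1000000
set_option maxHeartbeats 1000000

lemma aux_expand (w : H ⊗[k] H) :
    ∑ i : Basis.ofVectorSpaceIndex k H, ∑ j : Basis.ofVectorSpaceIndex k H,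
      (dualDistrib k H H ((b).coord i ⊗ₜ (b).coord j)) w • ((b) i ⊗ₜ[k] (b) j) = w := by
  induction w using TensorProduct.induction_on with
  | zero => simp
  | add x y hx hy =>
      simp only [map_add, add_smul, Finset.sum_add_distrib, hx, hy]
  | tmul a c =>
      simp only [dualDistrib_apply]
      have h1 : ∀ i j : Basis.ofVectorSpaceIndex k H,
          ((b).coord i a * (b).coord j c) • ((b) i ⊗ₜ[k] (b) j)
            = ((b).coord i a • (b) i) ⊗ₜ[k] ((b).coord j c • (b) j) := by
        intro i j
        rw [smul_tmul_smul]
      simp only [h1]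
      have h2 : ∀ i : Basis.ofVectorSpaceIndex k H,
          ∑ j : Basis.ofVectorSpaceIndex k H,
            ((b).coord i a • (b) i) ⊗ₜ[k] ((b).coord j c • (b) j)
          = ((b).coord i a • (b) i) ⊗ₜ[k] c := by
        intro i
        rw [← tmul_sum]
        congr 1
        simp only [Basis.coord_apply]
        exact (b).sum_repr c
      simp only [h2]
      rw [← sum_tmul]
      congr 1
      simp only [Basis.coord_apply]
      exact (b).sum_repr a

lemma keyLem :
    ∑ i : Basis.ofVectorSpaceIndex k H,
        (b).coord i ⊗ₜ[k] (Coalgebra.comul (R := k) ((b) i))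
      = ∑ i : Basis.ofVectorSpaceIndex k H, ∑ j : Basis.ofVectorSpaceIndex k H,
        (convL k H) ((b).coord i ⊗ₜ (b).coord j) ⊗ₜ[k] ((b) i ⊗ₜ[k] (b) j) := by
  classical
  apply (dualTensorHomEquivOfBasis (N := H ⊗[k] H) (b)).injective
  rw [dualTensorHomEquivOfBasis_apply, dualTensorHomEquivOfBasis_apply]
  apply (b).ext
  intro t
  simp only [map_sum, LinearMap.sum_apply, dualTensorHom_apply, Basis.coord_apply,
    Basis.repr_self, Finsupp.single_apply, ite_smul, one_smul, zero_smul]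
  rw [Finset.sum_ite_eq Finset.univ t (fun i => Coalgebra.comul (R := k) ((b) i))]
  simp only [Finset.mem_univ, if_true]
  simp only [convL, LinearMap.coe_comp, Function.comp_apply, LinearMap.dualMap_apply]
  exact (aux_expand _).symm

set_option synthInstance.maxHeartbeats 400000 in
lemma comm_canel : (TensorProduct.comm k H (Dual k H)) (canel k H)
    = ∑ i : Basis.ofVectorSpaceIndex k H, (b).coord i ⊗ₜ[k] (b) i := by
  rw [canel, coevaluation_apply_one, _root_.map_sum]
  simp

lemma insD_apply (aR : M ⊗[k] H →ₗ[k] M) (m : M) :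
    insD aR m = ∑ i : Basis.ofVectorSpaceIndex k H,
      (b).coord i ⊗ₜ[k] aR (m ⊗ₜ (b) i) := by
  rw [insD]
  simp only [LinearMap.coe_comp, Function.comp_apply, TensorProduct.mk_apply,
    LinearEquiv.coe_coe, comm_canel, sum_tmul, map_sum, assoc_tmul, map_tmul,
    LinearMap.id_coe, id_eq, comm_tmul]
  simp [LinearMap.sum_apply, map_sum]

lemma gw (aR : M ⊗[k] H →ₗ[k] M) (aR' : N ⊗[k] H →ₗ[k] N) (m : M) (n : N) (w : H ⊗[k] H) :
    (map aR aR') ((tensorTensorTensorComm k M N H H) ((m ⊗ₜ n) ⊗ₜ w))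
      = (map (aR ∘ₗ TensorProduct.mk k M H m) (aR' ∘ₗ TensorProduct.mk k N H n)) w := by
  induction w using TensorProduct.induction_on with
  | zero => simp
  | add x y hx hy => simp only [tmul_add, map_add, hx, hy]
  | tmul a c => simp

lemma core (D : LRData k H M) (D' : LRData k H N) (h h' : H) (m : M) (n : N) :
    ∑ i : Basis.ofVectorSpaceIndex k H,
      ((h * h') ⊗ₜ[k] (b).coord i) ⊗ₜ[k]
        ((map D.aR D'.aR) ((tensorTensorTensorComm k M N H H)
          ((m ⊗ₜ n) ⊗ₜ Coalgebra.comul (R := k) ((b) i))))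
    = ∑ i : Basis.ofVectorSpaceIndex k H, ∑ j : Basis.ofVectorSpaceIndex k H,
        ((h * h') ⊗ₜ[k] (convL k H) ((b).coord i ⊗ₜ (b).coord j)) ⊗ₜ[k]
          (D.aR (m ⊗ₜ (b) i) ⊗ₜ[k] D'.aR (n ⊗ₜ (b) j)) := by
  have key := congrArg (map (TensorProduct.mk k H (Dual k H) (h * h'))
      (map (D.aR ∘ₗ TensorProduct.mk k M H m) (D'.aR ∘ₗ TensorProduct.mk k N H n)))
    (keyLem (k := k) (H := H))
  simp only [map_sum, map_tmul, TensorProduct.mk_apply, LinearMap.coe_comp,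
    Function.comp_apply] at key
  simp only [gw, TensorProduct.mk_apply]
  exact key

end

set_option synthInstance.maxHeartbeats 1000000
set_option maxHeartbeats 4000000

/-- the `H ⊗ H^*`-coaction induced by `F` on the tensor product `M ⊗ N`
in `𝓛𝓡(H)` coincides with the codiagonal coaction on `F(M) ⊗ F(N)`. -/
theorem statement16 {k : Type} [Field k] {H : Type} [Ring H] [Bialgebra k H]
    [FiniteDimensional k H] {M N : Type} [AddCommGroup M] [Module k M]
    [AddCommGroup N] [Module k N]
    (D : LRData k H M) (D' : LRData k H N) (hD : IsLR D) (hD' : IsLR D') :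
    Fco (tensorLR D D') = (tensorYD (Fdata D) (Fdata D')).coact := by
  apply TensorProduct.ext'
  intro m n
  simp only [Fco, Fdata, tensorLR, tensorYD, LinearMap.coe_comp, LinearEquiv.coe_coe,
    Function.comp_apply, map_tmul]
  generalize D.cL m = u
  generalize D'.cL n = v
  induction v using TensorProduct.induction_on with
  | zero => simp
  | add x y hx hy => simp only [tmul_add, add_tmul, map_add, hx, hy]
  | tmul h' n0 =>
            induction u using TensorProduct.induction_on with
            | zero => simp
            | add x y hx hy => simp only [tmul_add, add_tmul, map_add, hx, hy]
            | tmul h m0 =>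
              simp only [tensorTensorTensorComm_tmul, map_tmul, LinearMap.mul'_apply,
                LinearMap.id_coe, id_eq, insD_apply, tmul_sum, sum_tmul, map_sum,
                LinearEquiv.coe_coe, assoc_symm_tmul, LinearMap.coe_comp, Function.comp_apply]
              have hmu : ∀ (a a' : H) (f g : Dual k H),
                  μX k H ((a ⊗ₜ f) ⊗ₜ (a' ⊗ₜ g)) = (a * a') ⊗ₜ[k] convL k H (f ⊗ₜ g) := by
                intro a a' f g
                simp [μX, tensorTensorTensorComm_tmul, LinearMap.mul'_apply]
              simp only [hmu]
              rw [Finset.sum_comm]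
              exact core D D' h h' m0 n0

end YDL
end
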